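/- arXiv:1412.5632 — 3 statements merged into one kernel-verified Lean document; each statement's English description precedes it below -/
import Mathlib

section
/- Let p and k be positive integers with p ≥ k + 1, let θ ≥ 0, and let Γ = M₁(θ) be the p×p symmetric matrix with 1's on the diagonal, θ in entries (j, k+1) and (k+1, j) for each j ∈ {1,…,k}, and 0's elsewhere. Let S = {1,…,k}. Then: (1) the incoherence parameter satisfies |||Γ_{S^cS}(Γ_{SS})^{−1}|||_∞ = kθ; (2) the minimum eigenvalue of Γ equals 1 − θ√k; and (3) the maximum eigenvalue of Γ equals 1 + θ√k. -/
open scoped BigOperators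

/-- The matrix `M₁(θ)`: `1`'s on the diagonal, `θ` in the first `k` entries of the
`(k+1)`-st row and column (0-based index `k`), and `0`'s elsewhere. -/
noncomputable def M1 (p k : ℕ) (θ : ℝ) : Matrix (Fin p) (Fin p) ℝ :=
  Matrix.of fun i j =>
    if i = j then 1
    else if ((i : ℕ) < k ∧ (j : ℕ) = k) ∨ ((j : ℕ) < k ∧ (i : ℕ) = k) then θ
    else 0

/-- The ℓ_∞-operator norm of a matrix: the maximum absolute row sum. -/
noncomputable def matInf {m n : Type*} [Fintype m] [Fintype n] (M : Matrix m n ℝ) : ℝ :=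
  ⨆ i, ∑ j, |M i j|

/-- The submatrix `Γ_{S^c S}` of `M₁(θ)`, with rows indexed by `S^c = {j : ¬ j < k}` and
columns indexed by `S = {j : j < k}`. -/
noncomputable def M1ScS (p k : ℕ) (θ : ℝ) :
    Matrix {j : Fin p // ¬ (j : ℕ) < k} {j : Fin p // (j : ℕ) < k} ℝ :=
  (M1 p k θ).submatrix (fun i => (i : Fin p)) (fun j => (j : Fin p))

/-- The submatrix `Γ_{SS}` of `M₁(θ)`, with rows and columns indexed by `S = {j : j < k}`. -/
noncomputable def M1SS (p k : ℕ) (θ : ℝ) :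
    Matrix {j : Fin p // (j : ℕ) < k} {j : Fin p // (j : ℕ) < k} ℝ :=
  (M1 p k θ).submatrix (fun i => (i : Fin p)) (fun j => (j : Fin p))

def equivS (p k : ℕ) (h : k ≤ p) : {j : Fin p // (j : ℕ) < k} ≃ Fin k where
  toFun j := ⟨j.1, j.2⟩
  invFun a := ⟨⟨a, lt_of_lt_of_le a.2 h⟩, a.2⟩
  left_inv j := rfl
  right_inv a := rfl

lemma cardS (p k : ℕ) (h : k ≤ p) : Fintype.card {j : Fin p // (j : ℕ) < k} = k := by
  rw [Fintype.card_congr (equivS p k h), Fintype.card_fin]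

lemma M1SS_eq_one (p k : ℕ) (θ : ℝ) : M1SS p k θ = 1 := by
  ext i j
  have hj := j.2
  have hi := i.2
  simp only [M1SS, Matrix.submatrix_apply, M1, Matrix.of_apply, Matrix.one_apply]
  rcases eq_or_ne (i : Fin p) (j : Fin p) with h | h
  · have : i = j := Subtype.ext h
    simp [h, this]
  · have : i ≠ j := fun hh => h (congrArg _ hh)
    simp [h, this, Nat.ne_of_lt hj, Nat.ne_of_lt hi]

lemma part1 (p k : ℕ) (hk : 0 < k) (hpk : k + 1 ≤ p) (θ : ℝ) (hθ : 0 ≤ θ) :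
    matInf (M1ScS p k θ * (M1SS p k θ)⁻¹) = k * θ := by
  have hkp : k < p := hpk
  rw [M1SS_eq_one, inv_one, Matrix.mul_one]
  have hrow : ∀ i : {j : Fin p // ¬ (j : ℕ) < k},
      (∑ j, |M1ScS p k θ i j|) = if ((i : Fin p) : ℕ) = k then k * θ else 0 := by
    intro i
    have hi := i.2
    have hentry : ∀ j : {j : Fin p // (j : ℕ) < k},
        |M1ScS p k θ i j| = if ((i : Fin p) : ℕ) = k then θ else 0 := by
      intro j
      have hj := j.2
      have hne : (i : Fin p) ≠ (j : Fin p) := by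
        intro h; rw [h] at hi; exact hi hj
      simp only [M1ScS, Matrix.submatrix_apply, M1, Matrix.of_apply, hne, if_false]
      by_cases h : ((i : Fin p) : ℕ) = k
      · simp [h, hj, abs_of_nonneg hθ]
      · simp [h, hi, hj]
    rw [Finset.sum_congr rfl fun j _ => hentry j, Finset.sum_const, Finset.card_univ,
      cardS p k (le_of_lt hkp)]
    by_cases h : ((i : Fin p) : ℕ) = k <;> simp [h]
  unfold matInf
  obtain ⟨i0, hi0⟩ : ∃ i0 : {j : Fin p // ¬ (j : ℕ) < k}, ((i0 : Fin p) : ℕ) = k :=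
    ⟨⟨⟨k, hkp⟩, lt_irrefl k⟩, rfl⟩
  have : Nonempty {j : Fin p // ¬ (j : ℕ) < k} := ⟨i0⟩
  apply le_antisymm
  · apply ciSup_le
    intro i
    rw [hrow i]
    by_cases h : ((i : Fin p) : ℕ) = k <;>
      simp [h, mul_nonneg (Nat.cast_nonneg k) hθ]
  · have := le_ciSup (Finite.bddAbove_range fun i : {j : Fin p // ¬ (j : ℕ) < k} =>
      ∑ j, |M1ScS p k θ i j|) i0
    rw [hrow i0, if_pos hi0] at this
    exact this

lemma quadform (p k : ℕ) (hkp : k < p) (θ : ℝ) (v : Fin p → ℝ) :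
    ∑ i, ∑ j, v i * M1 p k θ i j * v j
      = (∑ i, v i ^ 2)
        + 2 * θ * (∑ i : Fin p, if (i : ℕ) < k then v i else 0) * v ⟨k, hkp⟩ := by
  set e : Fin p := ⟨k, hkp⟩ with he
  have hcond : ∀ j : Fin p, ((j : ℕ) = k) ↔ j = e := by
    intro j; rw [Fin.ext_iff]
  have key : ∀ i j : Fin p, v i * M1 p k θ i j * v j =
      (if j = i then v i * v j else 0)
      + θ * ((if (i : ℕ) < k then v i else 0) * (if j = e then v j else 0))
      + θ * ((if i = e then v i else 0) * (if (j : ℕ) < k then v j else 0)) := by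
    intro i j
    simp only [M1, Matrix.of_apply, ← hcond]
    by_cases h1 : i = j
    · subst h1
      by_cases h2 : (i : ℕ) < k <;> by_cases h5 : (i : ℕ) = k <;>
        first | omega | (simp [h2, h5]; try ring)
    · have h1' : j ≠ i := Ne.symm h1
      by_cases h2 : (i : ℕ) < k <;> by_cases h3 : (j : ℕ) = k <;>
        by_cases h4 : (j : ℕ) < k <;> by_cases h5 : (i : ℕ) = k <;>
        first | omega | (simp [h1, h1', h2, h3, h4, h5]; try ring)
  simp only [key, Finset.sum_add_distrib]
  have s1 : ∑ i : Fin p, ∑ j : Fin p, (if j = i then v i * v j else 0) = ∑ i, v i ^ 2 := by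
    refine Finset.sum_congr rfl fun i _ => ?_
    rw [Finset.sum_ite_eq' Finset.univ i (fun j => v i * v j)]
    simp [sq]
  have s2 : ∑ i : Fin p, ∑ j : Fin p,
      θ * ((if (i : ℕ) < k then v i else 0) * (if j = e then v j else 0))
      = θ * (∑ i : Fin p, if (i : ℕ) < k then v i else 0) * v e := by
    simp only [← Finset.mul_sum]
    rw [← Finset.sum_mul, Finset.sum_ite_eq' Finset.univ e v]
    simp [mul_assoc]
  have s3 : ∑ i : Fin p, ∑ j : Fin p,
      θ * ((if i = e then v i else 0) * (if (j : ℕ) < k then v j else 0))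
      = θ * v e * (∑ j : Fin p, if (j : ℕ) < k then v j else 0) := by
    simp only [← Finset.mul_sum]
    rw [← Finset.sum_mul, Finset.sum_ite_eq' Finset.univ e v]
    simp [mul_assoc]
  rw [s1, s2, s3]
  ring

lemma norm_one_sum_sq (p : ℕ) (v : EuclideanSpace ℝ (Fin p)) (hv : ‖v‖ = 1) :
    ∑ i, v i ^ 2 = 1 := by
  have h := EuclideanSpace.norm_eq v
  rw [hv] at h
  have h2 : Real.sqrt (∑ i, ‖v i‖ ^ 2) = 1 := h.symm
  rw [Real.sqrt_eq_one] at h2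
  simpa [Real.norm_eq_abs, sq_abs] using h2

lemma filter_card (p k : ℕ) (h : k ≤ p) :
    (Finset.univ.filter (fun i : Fin p => (i : ℕ) < k)).card = k := by
  rw [← Fintype.card_subtype, cardS p k h]

lemma cross_bound (p k : ℕ) (hkp : k < p) (θ : ℝ) (hθ : 0 ≤ θ)
    (v : EuclideanSpace ℝ (Fin p)) (hv : ‖v‖ = 1) :
    |2 * θ * (∑ i : Fin p, if (i : ℕ) < k then v i else 0) * v ⟨k, hkp⟩|
      ≤ θ * Real.sqrt k := by
  set e : Fin p := ⟨k, hkp⟩ with he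
  set s := Finset.univ.filter (fun i : Fin p => (i : ℕ) < k) with hs
  set T := ∑ i : Fin p, if (i : ℕ) < k then v i else 0 with hT
  set A := ∑ i ∈ s, v i ^ 2 with hA
  have hTs : T = ∑ i ∈ s, v i := by
    rw [hT, hs, Finset.sum_filter]
  have hcard : s.card = k := filter_card p k (le_of_lt hkp)
  have hT2 : T ^ 2 ≤ (k : ℝ) * A := by
    rw [hTs, hA]
    calc (∑ i ∈ s, v i) ^ 2 ≤ s.card * ∑ i ∈ s, v i ^ 2 := sq_sum_le_card_mul_sum_sq
    _ = (k : ℝ) * ∑ i ∈ s, v i ^ 2 := by rw [hcard]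
  have hsum : ∑ i, v i ^ 2 = 1 := norm_one_sum_sq p v hv
  have hes : e ∉ s := by simp [hs, he]
  have hAe : A + v e ^ 2 ≤ 1 := by
    rw [← hsum, hA]
    have hins : (∑ i ∈ insert e s, v i ^ 2) = v e ^ 2 + ∑ i ∈ s, v i ^ 2 :=
      Finset.sum_insert hes
    have hle : (∑ i ∈ insert e s, v i ^ 2) ≤ ∑ i : Fin p, v i ^ 2 :=
      Finset.sum_le_sum_of_subset_of_nonneg (Finset.subset_univ _)
        (fun i _ _ => sq_nonneg _)
    linarith
  have hA0 : 0 ≤ A := Finset.sum_nonneg fun i _ => sq_nonneg _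
  have e1 : 4 * A * v e ^ 2 ≤ 1 := by
    nlinarith [sq_nonneg (A - v e ^ 2), hAe, hA0, sq_nonneg (v e),
      add_nonneg hA0 (sq_nonneg (v e))]
  have e2 : T ^ 2 * v e ^ 2 ≤ (k : ℝ) * A * v e ^ 2 := by
    have := mul_le_mul_of_nonneg_right hT2 (sq_nonneg (v e))
    linarith
  have h1 : (2 * T * v e) ^ 2 ≤ (k : ℝ) := by
    nlinarith [e1, e2, Nat.cast_nonneg (α := ℝ) k]
  have h2 : |2 * T * v e| ≤ Real.sqrt k := by
    rw [← Real.sqrt_sq_eq_abs]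
    exact Real.sqrt_le_sqrt h1
  have : |2 * θ * T * v e| = θ * |2 * T * v e| := by
    rw [show 2 * θ * T * v e = θ * (2 * T * v e) by ring, abs_mul, abs_of_nonneg hθ]
  rw [this]
  exact mul_le_mul_of_nonneg_left h2 hθ

lemma sqrt_calc (k : ℕ) (hk : 0 < k) :
    2 * ((k : ℝ) * (Real.sqrt (2 * (k : ℝ)))⁻¹) * (Real.sqrt 2)⁻¹ = Real.sqrt k := by
  have hk' : (0 : ℝ) < k := by exact_mod_cast hk
  rw [Real.sqrt_mul (by norm_num : (0:ℝ) ≤ 2)]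
  have h2 : (0:ℝ) < Real.sqrt 2 := Real.sqrt_pos.2 (by norm_num)
  have hks : (0:ℝ) < Real.sqrt k := Real.sqrt_pos.2 hk'
  have m2 : Real.sqrt 2 * Real.sqrt 2 = 2 := Real.mul_self_sqrt (by norm_num)
  have mk : Real.sqrt k * Real.sqrt k = k := Real.mul_self_sqrt hk'.le
  field_simp
  nlinarith [m2, mk, h2, hks]

lemma witness (p k : ℕ) (hk : 0 < k) (hkp : k < p) (θ : ℝ) (ε : ℝ) (hε : ε = 1 ∨ ε = -1) :
    ∃ v : EuclideanSpace ℝ (Fin p), ‖v‖ = 1 ∧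
      (∑ i, ∑ j, v i * M1 p k θ i j * v j) = 1 + ε * (θ * Real.sqrt k) := by
  have hε2 : ε ^ 2 = 1 := by rcases hε with h | h <;> norm_num [h]
  set a : ℝ := (Real.sqrt (2 * (k : ℝ)))⁻¹ with ha
  set b : ℝ := (Real.sqrt 2)⁻¹ with hb
  have hk' : (0 : ℝ) < k := by exact_mod_cast hk
  have ha2 : a ^ 2 = (2 * (k:ℝ))⁻¹ := by
    rw [ha, ← Real.sqrt_inv, Real.sq_sqrt (by positivity)]
  have hb2 : b ^ 2 = 2⁻¹ := by
    rw [hb, ← Real.sqrt_inv, Real.sq_sqrt (by norm_num)]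
  set w : EuclideanSpace ℝ (Fin p) :=
    WithLp.toLp 2 (fun i : Fin p => if (i : ℕ) < k then a else if (i : ℕ) = k then ε * b else 0) with hw
  set e : Fin p := ⟨k, hkp⟩ with he
  have hwe : w e = ε * b := by
    rw [hw]; simp [he]
  have hsq : ∀ i : Fin p, w i ^ 2 =
      if (i : ℕ) < k then a ^ 2 else (if i = e then b ^ 2 else 0) := by
    intro i
    rw [hw]
    by_cases h1 : (i : ℕ) < k
    · simp [h1]
    · by_cases h2 : (i : ℕ) = k
      · have : i = e := by rw [he]; exact Fin.ext h2
        simp [h1, h2, this, mul_pow, hε2, he]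
      · have : i ≠ e := by rw [he]; intro hh; exact h2 (by rw [hh])
        simp [h1, h2, this]
  have hes : e ∈ Finset.univ.filter (fun i : Fin p => ¬ (i : ℕ) < k) := by
    simp [he]
  have hsumsq : ∑ i, w i ^ 2 = 1 := by
    rw [Finset.sum_congr rfl fun i _ => hsq i, Finset.sum_ite, Finset.sum_const,
      filter_card p k (le_of_lt hkp), Finset.sum_ite_eq' _ e (fun _ => b ^ 2), if_pos hes,
      ha2, hb2]
    field_simp
    rw [nsmul_eq_mul, mul_one_div, ← mul_div_assoc, div_self (by positivity)]; norm_num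
  have hnorm : ‖w‖ = 1 := by
    rw [EuclideanSpace.norm_eq]
    have : ∀ i : Fin p, ‖w i‖ ^ 2 = w i ^ 2 := fun i => by
      rw [Real.norm_eq_abs, sq_abs]
    rw [Finset.sum_congr rfl fun i _ => this i, hsumsq, Real.sqrt_one]
  have hT : (∑ i : Fin p, if (i : ℕ) < k then w i else 0) = k * a := by
    have : ∀ i : Fin p, (if (i : ℕ) < k then w i else 0)
        = if (i : ℕ) < k then a else 0 := by
      intro i
      by_cases h1 : (i : ℕ) < k <;> simp [hw, h1]
    rw [Finset.sum_congr rfl fun i _ => this i, Finset.sum_ite, Finset.sum_const,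
      Finset.sum_const, filter_card p k (le_of_lt hkp)]
    simp
  refine ⟨w, hnorm, ?_⟩
  rw [quadform p k hkp θ w, hsumsq, hT, hwe]
  have : 2 * θ * ((k : ℝ) * a) * (ε * b) = ε * (θ * (2 * ((k:ℝ) * a) * b)) := by ring
  rw [this, ha, hb, sqrt_calc k hk]

/-- with `Γ = M₁(θ)` and `S = {1,…,k}`: (1) the incoherence parameter is
`|||Γ_{S^cS} Γ_{SS}⁻¹|||_∞ = kθ`; (2) the minimum eigenvalue of `Γ` (the least value of the
quadratic form over unit ℓ₂-norm vectors) is `1 − θ√k`; (3) the maximum eigenvalue is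
`1 + θ√k`. -/
theorem M1_incoherence_eigenvalues (p k : ℕ) (hp : 0 < p) (hk : 0 < k) (hpk : k + 1 ≤ p)
    (θ : ℝ) (hθ : 0 ≤ θ) :
    matInf (M1ScS p k θ * (M1SS p k θ)⁻¹) = k * θ ∧
    IsLeast {c : ℝ | ∃ v : EuclideanSpace ℝ (Fin p), ‖v‖ = 1 ∧
        c = ∑ i, ∑ j, v i * M1 p k θ i j * v j}
      (1 - θ * Real.sqrt k) ∧
    IsGreatest {c : ℝ | ∃ v : EuclideanSpace ℝ (Fin p), ‖v‖ = 1 ∧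
        c = ∑ i, ∑ j, v i * M1 p k θ i j * v j}
      (1 + θ * Real.sqrt k) := by
  have hkp : k < p := hpk
  refine ⟨part1 p k hk hpk θ hθ, ⟨?_, ?_⟩, ⟨?_, ?_⟩⟩
  · obtain ⟨v, hv, hf⟩ := witness p k hk hkp θ (-1) (Or.inr rfl)
    exact ⟨v, hv, by rw [hf]; ring⟩
  · rintro c ⟨v, hv, rfl⟩
    rw [quadform p k hkp θ v, norm_one_sum_sq p v hv]
    have h := (abs_le.1 (cross_bound p k hkp θ hθ v hv)).1
    linarith
  · obtain ⟨v, hv, hf⟩ := witness p k hk hkp θ 1 (Or.inl rfl)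
    exact ⟨v, hv, by rw [hf]; ring⟩
  · rintro c ⟨v, hv, rfl⟩
    rw [quadform p k hkp θ v, norm_one_sum_sq p v hv]
    have h := (abs_le.1 (cross_bound p k hkp θ hθ v hv)).2
    linarith
end

section
/- Let n, p be positive integers, X an n×p real matrix, S ⊆ {1,…,p}, and let X_S (respectively X_{S^c}) denote the submatrix of X with columns indexed by S (respectively by the complement of S). Suppose X_SᵀX_S is invertible. Let β* ∈ ℝ^p with supp(β*) ⊆ S, let ε ∈ ℝ^n, and set y := Xβ* + ε, γ̂ := Xᵀy/n, Γ̂ := XᵀX/n. Then γ̂_{S^c} − Γ̂_{S^cS}(Γ̂_{SS})^{−1}γ̂_S = X_{S^c}ᵀΠε/n, where Π := I_n − X_S(X_SᵀX_S)^{−1}X_Sᵀ is the orthogonal projection onto the orthogonal complement of the column space of X_S. -/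
open scoped BigOperators
open Matrix

/-- The submatrix of `X` consisting of the columns indexed by `S`. -/
noncomputable def colsIn (n p : ℕ) (X : Matrix (Fin n) (Fin p) ℝ) (S : Finset (Fin p)) :
    Matrix (Fin n) {j : Fin p // j ∈ S} ℝ :=
  X.submatrix id fun j => (j : Fin p)

/-- The submatrix of `X` consisting of the columns indexed by the complement of `S`. -/
noncomputable def colsOut (n p : ℕ) (X : Matrix (Fin n) (Fin p) ℝ) (S : Finset (Fin p)) :
    Matrix (Fin n) {j : Fin p // j ∉ S} ℝ :=
  X.submatrix id fun j => (j : Fin p)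

lemma residual_aux {n : ℕ} (hn : 0 < n) {s t : Type*} [Fintype s] [Fintype t] [DecidableEq s]
    (A : Matrix (Fin n) s ℝ) (B : Matrix (Fin n) t ℝ)
    (hinv : IsUnit (Aᵀ * A).det) (b : s → ℝ) (ε : Fin n → ℝ) :
    ((n : ℝ)⁻¹ • Bᵀ.mulVec (A.mulVec b + ε)) -
      ((n : ℝ)⁻¹ • (Bᵀ * A)).mulVec
        (((n : ℝ)⁻¹ • (Aᵀ * A))⁻¹.mulVec ((n : ℝ)⁻¹ • Aᵀ.mulVec (A.mulVec b + ε))) =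
      (n : ℝ)⁻¹ • Bᵀ.mulVec ((1 - A * (Aᵀ * A)⁻¹ * Aᵀ).mulVec ε) := by
  have hn' : (n : ℝ) ≠ 0 := Nat.cast_ne_zero.mpr hn.ne'
  set y := A.mulVec b + ε with hy
  have hinvs : ((n : ℝ)⁻¹ • (Aᵀ * A))⁻¹ = (n : ℝ) • (Aᵀ * A)⁻¹ := by
    apply Matrix.inv_eq_right_inv
    rw [Matrix.smul_mul, Matrix.mul_smul, Matrix.mul_nonsing_inv _ hinv, smul_smul,
      inv_mul_cancel₀ hn', one_smul]
  have hPA : (A * (Aᵀ * A)⁻¹ * Aᵀ).mulVec (A.mulVec b) = A.mulVec b := by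
    rw [Matrix.mulVec_mulVec, Matrix.mul_assoc, Matrix.mul_assoc,
      Matrix.nonsing_inv_mul _ hinv, Matrix.mul_one]
  have key : Bᵀ.mulVec y - (Bᵀ * (A * (Aᵀ * A)⁻¹ * Aᵀ)).mulVec y
      = Bᵀ.mulVec ((1 - A * (Aᵀ * A)⁻¹ * Aᵀ).mulVec ε) := by
    rw [← Matrix.mulVec_mulVec, ← Matrix.mulVec_sub]
    rw [Matrix.sub_mulVec, Matrix.one_mulVec, hy, Matrix.mulVec_add, hPA]
    abel_nf
  have hinner : ((n : ℝ)⁻¹ • (Aᵀ * A))⁻¹.mulVec ((n : ℝ)⁻¹ • Aᵀ.mulVec y)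
      = (Aᵀ * A)⁻¹.mulVec (Aᵀ.mulVec y) := by
    rw [hinvs, Matrix.smul_mulVec, Matrix.mulVec_smul, smul_smul,
      mul_inv_cancel₀ hn', one_smul]
  rw [hinner, Matrix.smul_mulVec, Matrix.mulVec_mulVec, Matrix.mulVec_mulVec,
    ← smul_sub]
  congr 1
  rw [← key]
  congr 2
  simp only [Matrix.mul_assoc]

/-- in the linear model `y = Xβ* + ε` with `supp(β*) ⊆ S` and `X_SᵀX_S`
invertible, with `γ̂ = Xᵀy/n` and `Γ̂ = XᵀX/n`, one has
`γ̂_{S^c} − Γ̂_{S^cS} Γ̂_{SS}⁻¹ γ̂_S = X_{S^c}ᵀ Π ε / n`, where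
`Π = I − X_S (X_SᵀX_S)⁻¹ X_Sᵀ`. -/
theorem residual_projection_identity (n p : ℕ) (hn : 0 < n) (hp : 0 < p)
    (X : Matrix (Fin n) (Fin p) ℝ) (S : Finset (Fin p))
    (hinv : IsUnit ((colsIn n p X S)ᵀ * colsIn n p X S).det)
    (βstar : Fin p → ℝ) (hβ : ∀ j, βstar j ≠ 0 → j ∈ S)
    (ε : Fin n → ℝ) :
    let y : Fin n → ℝ := X.mulVec βstar + ε
    let γhat : Fin p → ℝ := (n : ℝ)⁻¹ • (Xᵀ.mulVec y)
    let Γhat : Matrix (Fin p) (Fin p) ℝ := (n : ℝ)⁻¹ • (Xᵀ * X)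
    let ΓSS : Matrix {j : Fin p // j ∈ S} {j : Fin p // j ∈ S} ℝ :=
      Γhat.submatrix (fun i => (i : Fin p)) (fun j => (j : Fin p))
    let ΓScS : Matrix {j : Fin p // j ∉ S} {j : Fin p // j ∈ S} ℝ :=
      Γhat.submatrix (fun i => (i : Fin p)) (fun j => (j : Fin p))
    let Pi : Matrix (Fin n) (Fin n) ℝ :=
      1 - colsIn n p X S * ((colsIn n p X S)ᵀ * colsIn n p X S)⁻¹ * (colsIn n p X S)ᵀ
    ∀ j : {j : Fin p // j ∉ S},
      γhat j - ΓScS.mulVec (ΓSS⁻¹.mulVec fun i : {j : Fin p // j ∈ S} => γhat i) j =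
        (n : ℝ)⁻¹ * ((colsOut n p X S)ᵀ.mulVec (Pi.mulVec ε)) j := by
  intro y γhat Γhat ΓSS ΓScS Pi j
  set A := colsIn n p X S with hA
  set B := colsOut n p X S with hB
  -- X β* = A (β* restricted to S)
  have hXβ : X.mulVec βstar = A.mulVec (fun i : {j : Fin p // j ∈ S} => βstar i) := by
    funext k
    simp only [Matrix.mulVec, dotProduct, hA, colsIn, Matrix.submatrix_apply, id]
    rw [Finset.sum_coe_sort S (fun j => X k j * βstar j)]
    refine (Finset.sum_subset S.subset_univ ?_).symm
    intro x _ hx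
    have : βstar x = 0 := by
      by_contra h
      exact hx (hβ x h)
    simp [this]
  have hy : y = A.mulVec (fun i : {j : Fin p // j ∈ S} => βstar i) + ε := by
    simp [y, hXβ]
  have hΓSS : ΓSS = (n : ℝ)⁻¹ • (Aᵀ * A) := by
    ext i k
    simp [ΓSS, Γhat, Matrix.mul_apply, hA, colsIn]
  have hΓScS : ΓScS = (n : ℝ)⁻¹ • (Bᵀ * A) := by
    ext i k
    simp [ΓScS, Γhat, Matrix.mul_apply, hA, hB, colsIn, colsOut]
  have hg : (fun i : {j : Fin p // j ∈ S} => γhat i) = (n : ℝ)⁻¹ • Aᵀ.mulVec y := by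
    funext i
    simp [γhat, Matrix.mulVec, dotProduct, hA, colsIn]
  have hγj : γhat j = ((n : ℝ)⁻¹ • Bᵀ.mulVec y) j := by
    simp [γhat, Matrix.mulVec, dotProduct, hB, colsOut]
  have := congrFun (residual_aux hn A B hinv (fun i : {j : Fin p // j ∈ S} => βstar i) ε) j
  rw [← hy] at this
  rw [hγj, hΓSS, hΓScS, hg]
  calc ((n : ℝ)⁻¹ • Bᵀ.mulVec y) j -
        ((n : ℝ)⁻¹ • (Bᵀ * A)).mulVec
          (((n : ℝ)⁻¹ • (Aᵀ * A))⁻¹.mulVec ((n : ℝ)⁻¹ • Aᵀ.mulVec y)) j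
      = (((n : ℝ)⁻¹ • Bᵀ.mulVec y) -
        ((n : ℝ)⁻¹ • (Bᵀ * A)).mulVec
          (((n : ℝ)⁻¹ • (Aᵀ * A))⁻¹.mulVec ((n : ℝ)⁻¹ • Aᵀ.mulVec y))) j := rfl
    _ = ((n : ℝ)⁻¹ • Bᵀ.mulVec ((1 - A * (Aᵀ * A)⁻¹ * Aᵀ).mulVec ε)) j := by rw [this]
    _ = (n : ℝ)⁻¹ * (Bᵀ.mulVec (Pi.mulVec ε)) j := rfl
end

section
/- Let p, d be positive integers, let Θ* be a symmetric positive definite p×p real matrix, let S := {(j,k) : Θ*_{jk} ≠ 0} be its support (which contains all diagonal pairs), and suppose every row of Θ* has at most d nonzero entries. Set Σ* := (Θ*)^{−1} and Γ* := Σ* ⊗ Σ* (a p²×p² matrix indexed by pairs), and suppose the submatrix Γ*_{SS} (rows and columns indexed by pairs in S) is invertible; let κ_Γ := |||(Γ*_{SS})^{−1}|||_∞ and κ_Σ := |||Σ*|||_∞. Let Σ̂ be a symmetric p×p matrix and r > 0 such that κ_Γ · max_{(j,k) ∈ S} |Σ̂_{jk} − Σ*_{jk}| ≤ r/2 and d·r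 ≤ min{λ_min(Θ*)/2, 1/(2κ_Σ), 1/(4κ_Γκ_Σ³)}, where λ_min(Θ*) is the minimum eigenvalue of Θ*. Then there exists a symmetric p×p matrix Θ̂ with support contained in S such that: (1) max_{j,k}|Θ̂_{jk} − Θ*_{jk}| ≤ r; (2) the spectral norm satisfies ‖Θ̂ − Θ*‖₂ ≤ d·r; (3) Θ̂ is invertible; and (4) Σ̂_{jk} = (Θ̂^{−1})_{jk} for all (j,k) ∈ S. -/
open scoped BigOperators Kronecker
open Matrix

section MatInf
variable {m n l : Type*} [Fintype m] [Fintype n] [Fintype l]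

lemma rowsum_le_matInf [Nonempty m] (M : Matrix m n ℝ) (i : m) :
    ∑ j, |M i j| ≤ matInf M :=
  le_ciSup (f := fun i => ∑ j, |M i j|) (Set.Finite.bddAbove (Set.finite_range _)) i

lemma matInf_nonneg [Nonempty m] (M : Matrix m n ℝ) : 0 ≤ matInf M :=
  le_trans (Finset.sum_nonneg fun _ _ => abs_nonneg _)
    (rowsum_le_matInf M (Classical.arbitrary m))

lemma abs_entry_le_matInf [Nonempty m] (M : Matrix m n ℝ) (i : m) (j : n) :
    |M i j| ≤ matInf M :=
  le_trans (Finset.single_le_sum (f := fun j => |M i j|)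
    (fun _ _ => abs_nonneg _) (Finset.mem_univ j)) (rowsum_le_matInf M i)

lemma matInf_le [Nonempty m] (M : Matrix m n ℝ) {b : ℝ}
    (h : ∀ i, ∑ j, |M i j| ≤ b) : matInf M ≤ b := ciSup_le h

lemma matInf_mul_le [Nonempty m] [Nonempty n] (A : Matrix m n ℝ) (B : Matrix n l ℝ) :
    matInf (A * B) ≤ matInf A * matInf B := by
  refine matInf_le _ fun i => ?_
  calc ∑ t, |(A * B) i t| ≤ ∑ t, ∑ u, |A i u| * |B u t| := by
        refine Finset.sum_le_sum fun t _ => ?_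
        rw [Matrix.mul_apply]
        refine (Finset.abs_sum_le_sum_abs _ _).trans ?_
        refine le_of_eq (Finset.sum_congr rfl fun u _ => abs_mul _ _)
    _ = ∑ u, |A i u| * ∑ t, |B u t| := by
        rw [Finset.sum_comm]
        exact Finset.sum_congr rfl fun u _ => (Finset.mul_sum _ _ _).symm
    _ ≤ ∑ u, |A i u| * matInf B := by
        refine Finset.sum_le_sum fun u _ => ?_
        exact mul_le_mul_of_nonneg_left (rowsum_le_matInf B u) (abs_nonneg _)
    _ = (∑ u, |A i u|) * matInf B := (Finset.sum_mul _ _ _).symm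
    _ ≤ matInf A * matInf B :=
        mul_le_mul_of_nonneg_right (rowsum_le_matInf A i) (matInf_nonneg B)

lemma matInf_add_le [Nonempty m] (A B : Matrix m n ℝ) :
    matInf (A + B) ≤ matInf A + matInf B := by
  refine matInf_le _ fun i => ?_
  calc ∑ j, |(A + B) i j| ≤ ∑ j, (|A i j| + |B i j|) :=
        Finset.sum_le_sum fun j _ => abs_add_le _ _
    _ = (∑ j, |A i j|) + ∑ j, |B i j| := Finset.sum_add_distrib
    _ ≤ matInf A + matInf B := add_le_add (rowsum_le_matInf A i) (rowsum_le_matInf B i)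

lemma matInf_one [DecidableEq m] [Nonempty m] : matInf (1 : Matrix m m ℝ) = 1 := by
  have h : ∀ i : m, ∑ j, |(1 : Matrix m m ℝ) i j| = 1 := by
    intro i
    simp [Matrix.one_apply, apply_ite abs]
  simp [matInf, h, ciSup_const]

/-- Bound on the entries of a product `A * E * W` when the entries of `E` are small. -/
lemma entry_triple_le [Nonempty m] (A : Matrix m m ℝ) (E : Matrix m m ℝ)
    (W : Matrix m m ℝ) {e : ℝ} (he : 0 ≤ e) (hE : ∀ i j, |E i j| ≤ e) (s t : m) :
    |(A * E * W) s t| ≤ matInf A * e * matInf Wᵀ := by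
  have hAE : ∀ v : m, |(A * E) s v| ≤ matInf A * e := by
    intro v
    rw [Matrix.mul_apply]
    refine (Finset.abs_sum_le_sum_abs _ _).trans ?_
    calc ∑ u, |A s u * E u v| = ∑ u, |A s u| * |E u v| :=
          Finset.sum_congr rfl fun u _ => abs_mul _ _
      _ ≤ ∑ u, |A s u| * e :=
          Finset.sum_le_sum fun u _ => mul_le_mul_of_nonneg_left (hE u v) (abs_nonneg _)
      _ = (∑ u, |A s u|) * e := (Finset.sum_mul _ _ _).symm
      _ ≤ matInf A * e := mul_le_mul_of_nonneg_right (rowsum_le_matInf A s) he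
  rw [Matrix.mul_apply]
  refine (Finset.abs_sum_le_sum_abs _ _).trans ?_
  calc ∑ v, |(A * E) s v * W v t| = ∑ v, |(A * E) s v| * |W v t| :=
        Finset.sum_congr rfl fun v _ => abs_mul _ _
    _ ≤ ∑ v, (matInf A * e) * |W v t| :=
        Finset.sum_le_sum fun v _ => mul_le_mul_of_nonneg_right (hAE v) (abs_nonneg _)
    _ = (matInf A * e) * ∑ v, |Wᵀ t v| := by
        rw [← Finset.mul_sum]; rfl
    _ ≤ matInf A * e * matInf Wᵀ :=
        mul_le_mul_of_nonneg_left (rowsum_le_matInf Wᵀ t) (mul_nonneg (matInf_nonneg A) he)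

end MatInf

noncomputable def specNorm {p : ℕ} (M : Matrix (Fin p) (Fin p) ℝ) : ℝ :=
  ‖Matrix.toEuclideanCLM (𝕜 := ℝ) M‖

section Aux2

/-- quadratic-form rewrite -/
lemma dot_eq_quad {n : Type*} [Fintype n] (M : Matrix n n ℝ) (v : n → ℝ) :
    dotProduct v (M *ᵥ v) = ∑ i, ∑ j, v i * M i j * v j := by
  simp [dotProduct, Matrix.mulVec, Finset.mul_sum, mul_assoc]

/-- Quadratic form bound for symmetric matrices via AM-GM. -/
lemma abs_quad_le {n : Type*} [Fintype n] [Nonempty n] (Δ : Matrix n n ℝ)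
    (hsym : Δ.IsSymm) (v : n → ℝ) :
    |∑ i, ∑ j, v i * Δ i j * v j| ≤ matInf Δ * ∑ i, v i ^ 2 := by
  have h1 : |∑ i, ∑ j, v i * Δ i j * v j| ≤ ∑ i, ∑ j, |Δ i j| * ((v i ^ 2 + v j ^ 2) / 2) := by
    refine (Finset.abs_sum_le_sum_abs _ _).trans ?_
    refine Finset.sum_le_sum fun i _ => ?_
    refine (Finset.abs_sum_le_sum_abs _ _).trans ?_
    refine Finset.sum_le_sum fun j _ => ?_
    rw [abs_mul, abs_mul, mul_comm (|v i|) (|Δ i j|), mul_assoc]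
    refine mul_le_mul_of_nonneg_left ?_ (abs_nonneg _)
    nlinarith [sq_nonneg (|v i| - |v j|), abs_nonneg (v i), abs_nonneg (v j),
      sq_abs (v i), sq_abs (v j)]
  refine h1.trans ?_
  have e1 : ∀ i j, |Δ i j| * ((v i ^ 2 + v j ^ 2) / 2)
      = |Δ i j| * v i ^ 2 / 2 + |Δ i j| * v j ^ 2 / 2 := fun i j => by ring
  have half1 : ∑ i, ∑ j, |Δ i j| * v i ^ 2 / 2 = (∑ i, (v i ^ 2) * (∑ j, |Δ i j|)) / 2 := by
    rw [Finset.sum_div]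
    refine Finset.sum_congr rfl fun i _ => ?_
    rw [← Finset.sum_div, ← Finset.sum_mul, mul_comm]
  have half2 : ∑ i, ∑ j, |Δ i j| * v j ^ 2 / 2 = (∑ j, (v j ^ 2) * (∑ i, |Δ i j|)) / 2 := by
    rw [Finset.sum_comm, Finset.sum_div]
    refine Finset.sum_congr rfl fun j _ => ?_
    rw [← Finset.sum_div, ← Finset.sum_mul, mul_comm]
  have h2 : ∑ i, ∑ j, |Δ i j| * ((v i ^ 2 + v j ^ 2) / 2)
      = (∑ i, (v i ^ 2) * (∑ j, |Δ i j|)) / 2 + (∑ j, (v j ^ 2) * (∑ i, |Δ i j|)) / 2 := by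
    simp_rw [e1, Finset.sum_add_distrib]
    rw [half1, half2]
  rw [h2]
  have hcol : ∀ j, ∑ i, |Δ i j| ≤ matInf Δ := by
    intro j
    have : ∀ i, |Δ i j| = |Δ j i| := fun i => by rw [hsym.apply i j]
    calc ∑ i, |Δ i j| = ∑ i, |Δ j i| := Finset.sum_congr rfl fun i _ => this i
      _ ≤ matInf Δ := rowsum_le_matInf Δ j
  have hv : ∀ i, (0:ℝ) ≤ v i ^ 2 := fun i => sq_nonneg _
  have b1 : ∑ i, (v i ^ 2) * (∑ j, |Δ i j|) ≤ matInf Δ * ∑ i, v i ^ 2 := by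
    rw [mul_comm (matInf Δ), Finset.sum_mul]
    exact Finset.sum_le_sum fun i _ =>
      mul_le_mul_of_nonneg_left (rowsum_le_matInf Δ i) (hv i)
  have b2 : ∑ j, (v j ^ 2) * (∑ i, |Δ i j|) ≤ matInf Δ * ∑ i, v i ^ 2 := by
    rw [mul_comm (matInf Δ), Finset.sum_mul]
    exact Finset.sum_le_sum fun j _ =>
      mul_le_mul_of_nonneg_left (hcol j) (hv j)
  linarith

/-- ℓ² operator bound for symmetric matrices by the max row sum. -/
lemma specNorm_le_matInf {p : ℕ} (hp : 0 < p) (M : Matrix (Fin p) (Fin p) ℝ)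
    (hsym : M.IsSymm) {c : ℝ} (hc : matInf M ≤ c) : specNorm M ≤ c := by
  have : Nonempty (Fin p) := ⟨⟨0, hp⟩⟩
  have hM0 : 0 ≤ matInf M := matInf_nonneg M
  have hc0 : 0 ≤ c := hM0.trans hc
  refine ContinuousLinearMap.opNorm_le_bound _ hc0 fun v => ?_
  have happ : ∀ i, (Matrix.toEuclideanCLM (𝕜 := ℝ) M v) i = (M *ᵥ (fun j => v j)) i := by
    intro i; rfl
  have hcol : ∀ j, ∑ i, |M i j| ≤ matInf M := by
    intro j
    calc ∑ i, |M i j| = ∑ i, |M j i| := Finset.sum_congr rfl fun i _ => by rw [hsym.apply i j]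
      _ ≤ matInf M := rowsum_le_matInf M j
  rw [EuclideanSpace.norm_eq, EuclideanSpace.norm_eq]
  have key : ∑ i, ‖(Matrix.toEuclideanCLM (𝕜 := ℝ) M v) i‖ ^ 2
      ≤ c ^ 2 * ∑ j, ‖v j‖ ^ 2 := by
    have hrow : ∀ i, ‖(Matrix.toEuclideanCLM (𝕜 := ℝ) M v) i‖ ^ 2
        ≤ matInf M * ∑ j, |M i j| * (v j) ^ 2 := by
      intro i
      rw [happ i, Real.norm_eq_abs, sq_abs, Matrix.mulVec, dotProduct]
      calc (∑ j, M i j * v j) ^ 2 ≤ (∑ j, |M i j * v j|) ^ 2 := by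
            rw [← sq_abs]
            have := Finset.abs_sum_le_sum_abs (fun j => M i j * v j) Finset.univ
            nlinarith [abs_nonneg (∑ j, M i j * v j),
              Finset.sum_nonneg (fun j (_ : j ∈ Finset.univ) => abs_nonneg (M i j * v j))]
        _ ≤ (∑ j, |M i j|) * ∑ j, |M i j| * (v j) ^ 2 := by
            refine Finset.sum_sq_le_sum_mul_sum_of_sq_eq_mul _
              (fun j _ => abs_nonneg _) (fun j _ => mul_nonneg (abs_nonneg _) (sq_nonneg _))
              (fun j _ => ?_)
            rw [abs_mul, mul_pow, sq_abs (v j)]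
            ring
        _ ≤ matInf M * ∑ j, |M i j| * (v j) ^ 2 := by
            refine mul_le_mul_of_nonneg_right (rowsum_le_matInf M i) ?_
            exact Finset.sum_nonneg fun j _ => mul_nonneg (abs_nonneg _) (sq_nonneg _)
    calc ∑ i, ‖(Matrix.toEuclideanCLM (𝕜 := ℝ) M v) i‖ ^ 2
        ≤ ∑ i, matInf M * ∑ j, |M i j| * (v j) ^ 2 := Finset.sum_le_sum fun i _ => hrow i
      _ = matInf M * ∑ j, (v j) ^ 2 * ∑ i, |M i j| := by
          rw [← Finset.mul_sum, Finset.sum_comm]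
          refine congrArg (matInf M * ·) (Finset.sum_congr rfl fun j _ => ?_)
          rw [Finset.mul_sum]
          exact Finset.sum_congr rfl fun i _ => mul_comm _ _
      _ ≤ matInf M * ∑ j, (v j) ^ 2 * matInf M := by
          refine mul_le_mul_of_nonneg_left (Finset.sum_le_sum fun j _ => ?_) hM0
          exact mul_le_mul_of_nonneg_left (hcol j) (sq_nonneg _)
      _ = matInf M * matInf M * ∑ j, (v j) ^ 2 := by
          rw [← Finset.sum_mul]; ring
      _ ≤ c ^ 2 * ∑ j, (v j) ^ 2 := by
          have h0 : (0:ℝ) ≤ ∑ j, (v j) ^ 2 := Finset.sum_nonneg fun j _ => sq_nonneg _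
          have h1 : matInf M * matInf M ≤ c * c := mul_le_mul hc hc hM0 hc0
          nlinarith [h0, h1]
      _ = c ^ 2 * ∑ j, ‖v j‖ ^ 2 := by
          refine congrArg (c ^ 2 * ·) (Finset.sum_congr rfl fun j _ => ?_)
          rw [Real.norm_eq_abs, sq_abs]
  calc √(∑ i, ‖(Matrix.toEuclideanCLM (𝕜 := ℝ) M v) i‖ ^ 2)
      ≤ √(c ^ 2 * ∑ j, ‖v j‖ ^ 2) := Real.sqrt_le_sqrt key
    _ = c * √(∑ j, ‖v j‖ ^ 2) := by
        rw [Real.sqrt_mul (sq_nonneg c), Real.sqrt_sq hc0]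

end Aux2

section Aux3
variable {p : ℕ}

noncomputable def matOf (S : Finset (Fin p × Fin p)) (x : {q // q ∈ S} → ℝ) :
    Matrix (Fin p) (Fin p) ℝ :=
  Matrix.of fun j k => if h : (j, k) ∈ S then x ⟨(j, k), h⟩ else 0

lemma matOf_sub (S : Finset (Fin p × Fin p)) (x y : {q // q ∈ S} → ℝ) :
    matOf S (x - y) = matOf S x - matOf S y := by
  ext j k
  by_cases h : (j, k) ∈ S <;> simp [matOf, h]

lemma abs_matOf_le (S : Finset (Fin p × Fin p)) {x : {q // q ∈ S} → ℝ} {c : ℝ} (hc : 0 ≤ c)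
    (h : ∀ q, |x q| ≤ c) (j k : Fin p) : |matOf S x j k| ≤ c := by
  by_cases hm : (j, k) ∈ S
  · simpa [matOf, hm] using h ⟨(j, k), hm⟩
  · simpa [matOf, hm] using hc

lemma matOf_apply_mem (S : Finset (Fin p × Fin p)) (x : {q // q ∈ S} → ℝ)
    {j k : Fin p} (h : (j, k) ∈ S) : matOf S x j k = x ⟨(j, k), h⟩ := by
  simp [matOf, h]

lemma rowsum_matOf_le (S : Finset (Fin p × Fin p)) {x : {q // q ∈ S} → ℝ} {c : ℝ} {d : ℕ}
    (hc : 0 ≤ c) (h : ∀ q, |x q| ≤ c)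
    (hcard : ∀ j : Fin p, (Finset.univ.filter fun k => (j, k) ∈ S).card ≤ d) (j : Fin p) :
    ∑ k, |matOf S x j k| ≤ d * c := by
  classical
  have h0 : ∑ k, |matOf S x j k|
      = ∑ k ∈ Finset.univ.filter (fun k => (j, k) ∈ S), |matOf S x j k| := by
    refine (Finset.sum_filter_of_ne fun k _ hk => ?_).symm
    by_contra hm
    exact hk (by simp [matOf, hm])
  rw [h0]
  calc ∑ k ∈ Finset.univ.filter (fun k => (j, k) ∈ S), |matOf S x j k|
      ≤ (Finset.univ.filter fun k => (j, k) ∈ S).card • c :=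
        Finset.sum_le_card_nsmul _ _ c fun k _ => abs_matOf_le S hc h j k
    _ = ((Finset.univ.filter fun k => (j, k) ∈ S).card : ℝ) * c := nsmul_eq_mul _ _
    _ ≤ d * c := by
        refine mul_le_mul_of_nonneg_right ?_ hc
        exact_mod_cast hcard j

lemma matInf_matOf_le [Nonempty (Fin p)] (S : Finset (Fin p × Fin p))
    {x : {q // q ∈ S} → ℝ} {c : ℝ} {d : ℕ} (hc : 0 ≤ c) (h : ∀ q, |x q| ≤ c)
    (hcard : ∀ j : Fin p, (Finset.univ.filter fun k => (j, k) ∈ S).card ≤ d) :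
    matInf (matOf S x) ≤ d * c :=
  matInf_le _ fun j => rowsum_matOf_le S hc h hcard j

lemma matOf_isSymm (S : Finset (Fin p × Fin p))
    (hswap : ∀ {a b : Fin p}, (a, b) ∈ S → (b, a) ∈ S) {x : {q // q ∈ S} → ℝ}
    (hx : ∀ (a b : Fin p) (h : (a, b) ∈ S), x ⟨(b, a), hswap h⟩ = x ⟨(a, b), h⟩) :
    (matOf S x).IsSymm := by
  ext j k
  show matOf S x k j = matOf S x j k
  by_cases h : (j, k) ∈ S
  · rw [matOf_apply_mem S x h, matOf_apply_mem S x (hswap h), hx j k h]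
  · have h' : (k, j) ∉ S := fun hm => h (hswap hm)
    simp [matOf, h, h']

lemma sum_sq_pos {n : Type*} [Fintype n] {v : n → ℝ} (hv : v ≠ 0) :
    0 < ∑ i, v i ^ 2 := by
  obtain ⟨i, hi⟩ := Function.ne_iff.mp hv
  exact Finset.sum_pos' (fun j _ => sq_nonneg _)
    ⟨i, Finset.mem_univ i, by exact pow_pos (abs_pos.mpr hi) 2 |>.trans_eq (sq_abs _)⟩

lemma quad_ge_lmin (hp : 0 < p) (Θ : Matrix (Fin p) (Fin p) ℝ) (lmin : ℝ)
    (hl : lmin ∈ lowerBounds {c : ℝ | ∃ v : EuclideanSpace ℝ (Fin p), ‖v‖ = 1 ∧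
        c = ∑ i, ∑ j, v i * Θ i j * v j}) (v : Fin p → ℝ) :
    lmin * ∑ i, v i ^ 2 ≤ ∑ i, ∑ j, v i * Θ i j * v j := by
  by_cases hv : v = 0
  · simp [hv]
  · set nn : ℝ := ∑ i, v i ^ 2 with hnn
    have hnnpos : 0 < nn := sum_sq_pos hv
    set a : ℝ := (Real.sqrt nn)⁻¹ with ha
    have hsq : Real.sqrt nn ^ 2 = nn := Real.sq_sqrt hnnpos.le
    have hspos : 0 < Real.sqrt nn := Real.sqrt_pos.mpr hnnpos
    set w : EuclideanSpace ℝ (Fin p) := (WithLp.equiv 2 _).symm v with hw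
    set u : EuclideanSpace ℝ (Fin p) := a • w with hu
    have hwi : ∀ i, w i = v i := fun i => rfl
    have hui : ∀ i, u i = a * v i := fun i => rfl
    have hwnorm : ‖w‖ = Real.sqrt nn := by
      rw [EuclideanSpace.norm_eq]
      congr 1
      exact Finset.sum_congr rfl fun i _ => by rw [hwi, Real.norm_eq_abs, sq_abs]
    have hunorm : ‖u‖ = 1 := by
      rw [hu, norm_smul, hwnorm, Real.norm_eq_abs, ha,
        abs_inv, abs_of_pos hspos, inv_mul_cancel₀ hspos.ne']
    have hmem : lmin ≤ ∑ i, ∑ j, u i * Θ i j * u j := hl ⟨u, hunorm, rfl⟩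
    have hscale : ∑ i, ∑ j, u i * Θ i j * u j = a ^ 2 * ∑ i, ∑ j, v i * Θ i j * v j := by
      rw [Finset.mul_sum]
      refine Finset.sum_congr rfl fun i _ => ?_
      rw [Finset.mul_sum]
      refine Finset.sum_congr rfl fun j _ => ?_
      rw [hui, hui]; ring
    have ha2 : a ^ 2 * nn = 1 := by
      rw [ha, ← hsq]; field_simp; rw [Real.sqrt_sq hspos.le]
    rw [hscale] at hmem
    have h5 : a ^ 2 * (∑ i, ∑ j, v i * Θ i j * v j) * nn = ∑ i, ∑ j, v i * Θ i j * v j := by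
      calc a ^ 2 * (∑ i, ∑ j, v i * Θ i j * v j) * nn
          = (a ^ 2 * nn) * (∑ i, ∑ j, v i * Θ i j * v j) := by ring
        _ = ∑ i, ∑ j, v i * Θ i j * v j := by rw [ha2, one_mul]
    have h6 := mul_le_mul_of_nonneg_right hmem hnnpos.le
    linarith [h6, h5]

lemma posDef_perturb (hp : 0 < p) (Θ : Matrix (Fin p) (Fin p) ℝ) (hΘsym : Θ.IsSymm)
    (lmin : ℝ)
    (hl : lmin ∈ lowerBounds {c : ℝ | ∃ v : EuclideanSpace ℝ (Fin p), ‖v‖ = 1 ∧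
        c = ∑ i, ∑ j, v i * Θ i j * v j})
    (Δ : Matrix (Fin p) (Fin p) ℝ) (hΔsym : Δ.IsSymm) (hΔ : matInf Δ < lmin) :
    (Θ + Δ).PosDef := by
  have : Nonempty (Fin p) := ⟨⟨0, hp⟩⟩
  refine Matrix.PosDef.of_dotProduct_mulVec_pos ?_ ?_
  · rw [Matrix.IsHermitian, Matrix.conjTranspose_eq_transpose_of_trivial]
    exact hΘsym.add hΔsym
  · intro v hv
    have hsv : star v = v := by
      funext i; exact star_trivial _
    rw [hsv, dot_eq_quad]
    have hsplit : ∑ i, ∑ j, v i * (Θ + Δ) i j * v j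
        = (∑ i, ∑ j, v i * Θ i j * v j) + ∑ i, ∑ j, v i * Δ i j * v j := by
      rw [← Finset.sum_add_distrib]
      refine Finset.sum_congr rfl fun i _ => ?_
      rw [← Finset.sum_add_distrib]
      refine Finset.sum_congr rfl fun j _ => ?_
      rw [Matrix.add_apply]; ring
    rw [hsplit]
    have h1 := quad_ge_lmin hp Θ lmin hl v
    have h2 := abs_quad_le Δ hΔsym v
    have h3 : 0 < ∑ i, v i ^ 2 := sum_sq_pos hv
    have h4 := abs_le.mp h2
    nlinarith [h1, h3, h4.1]

end Aux3

section Aux4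
variable {m n : Type*} [Fintype m] [Fintype n]

lemma matInf_sub_le [Nonempty m] (A B : Matrix m n ℝ) :
    matInf (A - B) ≤ matInf A + matInf B := by
  refine matInf_le _ fun i => ?_
  calc ∑ j, |(A - B) i j| ≤ ∑ j, (|A i j| + |B i j|) :=
        Finset.sum_le_sum fun j _ => (abs_sub _ _)
    _ = (∑ j, |A i j|) + ∑ j, |B i j| := Finset.sum_add_distrib
    _ ≤ matInf A + matInf B := add_le_add (rowsum_le_matInf A i) (rowsum_le_matInf B i)

lemma abs_mulVec_le [Nonempty m] (M : Matrix m n ℝ) {v : n → ℝ} {c : ℝ} (hc : 0 ≤ c)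
    (h : ∀ j, |v j| ≤ c) (i : m) : |(M *ᵥ v) i| ≤ matInf M * c := by
  show |∑ j, M i j * v j| ≤ matInf M * c
  refine (Finset.abs_sum_le_sum_abs _ _).trans ?_
  calc ∑ j, |M i j * v j| = ∑ j, |M i j| * |v j| :=
        Finset.sum_congr rfl fun j _ => abs_mul _ _
    _ ≤ ∑ j, |M i j| * c :=
        Finset.sum_le_sum fun j _ => mul_le_mul_of_nonneg_left (h j) (abs_nonneg _)
    _ = (∑ j, |M i j|) * c := (Finset.sum_mul _ _ _).symm
    _ ≤ matInf M * c := mul_le_mul_of_nonneg_right (rowsum_le_matInf M i) hc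

end Aux4

noncomputable def kronSS (p : ℕ) (Sig : Matrix (Fin p) (Fin p) ℝ)
    (S : Finset (Fin p × Fin p)) : Matrix {q // q ∈ S} {q // q ∈ S} ℝ :=
  (Sig ⊗ₖ Sig).submatrix (fun a => (a : Fin p × Fin p)) (fun b => (b : Fin p × Fin p))

set_option maxHeartbeats 1600000 in
/-- Brouwer fixed-point construction for the graphical Lasso: under the
stated conditions on `Θ*`, its support `S` (containing the diagonal, with at most `d`
nonzeros per row), `Σ̂` and `r`, there is a symmetric matrix `Θ̂` supported on `S` with
`‖Θ̂ − Θ*‖_max ≤ r`, `‖Θ̂ − Θ*‖₂ ≤ d·r`, `Θ̂` invertible, and `Σ̂_{jk} = (Θ̂⁻¹)_{jk}` for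
all `(j,k) ∈ S`. -/
theorem glasso_brouwer_fixed_point (p d : ℕ) (hp : 0 < p) (hd : 0 < d)
    (Θs : Matrix (Fin p) (Fin p) ℝ) (hsym : Θs.IsSymm) (hpd : Θs.PosDef)
    (S : Finset (Fin p × Fin p)) (hS : ∀ q : Fin p × Fin p, q ∈ S ↔ Θs q.1 q.2 ≠ 0)
    (hdiag : ∀ j : Fin p, (j, j) ∈ S)
    (hrow : ∀ j : Fin p, Set.ncard {k : Fin p | Θs j k ≠ 0} ≤ d)
    (hΓinv : IsUnit (kronSS p Θs⁻¹ S).det)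
    (Sighat : Matrix (Fin p) (Fin p) ℝ) (hSighat : Sighat.IsSymm)
    (r : ℝ) (hr : 0 < r)
    (hdev : matInf (kronSS p Θs⁻¹ S)⁻¹ *
        (⨆ q : {q : Fin p × Fin p // q ∈ S}, |Sighat q.1.1 q.1.2 - Θs⁻¹ q.1.1 q.1.2|) ≤
      r / 2)
    (lmin : ℝ)
    (hlmin : IsLeast {c : ℝ | ∃ v : EuclideanSpace ℝ (Fin p), ‖v‖ = 1 ∧
        c = ∑ i, ∑ j, v i * Θs i j * v j} lmin)
    (hdr : (d : ℝ) * r ≤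
      min (lmin / 2) (min (1 / (2 * matInf Θs⁻¹))
        (1 / (4 * matInf (kronSS p Θs⁻¹ S)⁻¹ * matInf Θs⁻¹ ^ 3)))) :
    ∃ Θh : Matrix (Fin p) (Fin p) ℝ, Θh.IsSymm ∧
      (∀ q : Fin p × Fin p, q ∉ S → Θh q.1 q.2 = 0) ∧
      (∀ i j : Fin p, |Θh i j - Θs i j| ≤ r) ∧
      specNorm (Θh - Θs) ≤ d * r ∧
      IsUnit Θh.det ∧
      ∀ q ∈ S, Sighat q.1 q.2 = Θh⁻¹ q.1 q.2 := by
  classical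
  have hnp : Nonempty (Fin p) := ⟨⟨0, hp⟩⟩
  have hnS : Nonempty {q : Fin p × Fin p // q ∈ S} := ⟨⟨(⟨0, hp⟩, ⟨0, hp⟩), hdiag _⟩⟩
  set κΓ : ℝ := matInf (kronSS p Θs⁻¹ S)⁻¹ with hκΓdef
  set kSig : ℝ := matInf Θs⁻¹ with hkSigdef
  set ε : ℝ := ⨆ q : {q : Fin p × Fin p // q ∈ S}, |Sighat q.1.1 q.1.2 - Θs⁻¹ q.1.1 q.1.2|
    with hεdef
  set D : ℝ := (d : ℝ) * r with hDdef
  -- basic matrix facts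
  have hΘdet : IsUnit Θs.det := isUnit_iff_ne_zero.mpr (ne_of_gt hpd.det_pos)
  have hTS : Θs * Θs⁻¹ = 1 := Matrix.mul_nonsing_inv _ hΘdet
  have hST : Θs⁻¹ * Θs = 1 := Matrix.nonsing_inv_mul _ hΘdet
  have hSsym : (Θs⁻¹).IsSymm := by
    rw [Matrix.IsSymm, Matrix.transpose_nonsing_inv, hsym.eq]
  have hswap : ∀ {a b : Fin p}, (a, b) ∈ S → (b, a) ∈ S := by
    intro a b h
    have h1 := (hS (a, b)).mp h
    refine (hS (b, a)).mpr ?_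
    simpa [hsym.apply a b] using h1
  have hcard : ∀ j : Fin p, (Finset.univ.filter fun k => (j, k) ∈ S).card ≤ d := by
    intro j
    have hset : {k : Fin p | Θs j k ≠ 0} = ↑(Finset.univ.filter fun k => (j, k) ∈ S) := by
      ext k; simp [hS (j, k)]
    have := hrow j
    rwa [hset, Set.ncard_coe_finset] at this
  -- scalar facts
  have hkSig0 : 0 ≤ kSig := matInf_nonneg _
  have hκΓ0 : 0 ≤ κΓ := matInf_nonneg _
  have hΓmul : (kronSS p Θs⁻¹ S)⁻¹ * kronSS p Θs⁻¹ S = 1 := Matrix.nonsing_inv_mul _ hΓinv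
  have hΓssInf : matInf (kronSS p Θs⁻¹ S) ≤ kSig ^ 2 := by
    refine matInf_le _ fun a => ?_
    have hterm : ∀ b : {q : Fin p × Fin p // q ∈ S},
        |kronSS p Θs⁻¹ S a b| = |Θs⁻¹ a.1.1 b.1.1| * |Θs⁻¹ a.1.2 b.1.2| := by
      intro b
      rw [kronSS, Matrix.submatrix_apply, Matrix.kroneckerMap_apply, abs_mul]
    calc ∑ b : {q : Fin p × Fin p // q ∈ S}, |kronSS p Θs⁻¹ S a b|
        = ∑ b : {q : Fin p × Fin p // q ∈ S}, |Θs⁻¹ a.1.1 b.1.1| * |Θs⁻¹ a.1.2 b.1.2| :=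
          Finset.sum_congr rfl fun b _ => hterm b
      _ = ∑ uv ∈ S, |Θs⁻¹ a.1.1 uv.1| * |Θs⁻¹ a.1.2 uv.2| := by
          rw [← Finset.sum_attach S fun uv => |Θs⁻¹ a.1.1 uv.1| * |Θs⁻¹ a.1.2 uv.2|]
          rw [← Finset.univ_eq_attach]
      _ ≤ ∑ uv : Fin p × Fin p, |Θs⁻¹ a.1.1 uv.1| * |Θs⁻¹ a.1.2 uv.2| := by
          refine Finset.sum_le_sum_of_subset_of_nonneg (Finset.subset_univ S) ?_
          exact fun uv _ _ => mul_nonneg (abs_nonneg _) (abs_nonneg _)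
      _ = (∑ u, |Θs⁻¹ a.1.1 u|) * ∑ v, |Θs⁻¹ a.1.2 v| := by
          rw [Finset.sum_mul_sum, Fintype.sum_prod_type]
      _ ≤ kSig ^ 2 := by
          rw [sq]
          exact mul_le_mul (rowsum_le_matInf _ _) (rowsum_le_matInf _ _)
            (Finset.sum_nonneg fun v _ => abs_nonneg _) hkSig0
  have hκ2 : 1 ≤ κΓ * kSig ^ 2 := by
    have h1 : matInf ((kronSS p Θs⁻¹ S)⁻¹ * kronSS p Θs⁻¹ S) = 1 := by
      rw [hΓmul, matInf_one]
    calc (1:ℝ) = matInf ((kronSS p Θs⁻¹ S)⁻¹ * kronSS p Θs⁻¹ S) := h1.symm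
      _ ≤ κΓ * matInf (kronSS p Θs⁻¹ S) := matInf_mul_le _ _
      _ ≤ κΓ * kSig ^ 2 := mul_le_mul_of_nonneg_left hΓssInf hκΓ0
  have hkSigpos : 0 < kSig := by
    rcases hkSig0.lt_or_eq with h | h
    · exact h
    · exfalso; rw [← h] at hκ2; nlinarith [hκ2]
  have hκΓpos : 0 < κΓ := by
    rcases hκΓ0.lt_or_eq with h | h
    · exact h
    · exfalso; rw [← h] at hκ2; nlinarith [hκ2]
  have hD0 : 0 < D := by
    rw [hDdef]
    have : (1:ℝ) ≤ (d:ℝ) := by exact_mod_cast hd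
    nlinarith [hr]
  have hdr1 : D ≤ lmin / 2 := hdr.trans (min_le_left _ _)
  have hdr3 : D ≤ 1 / (4 * κΓ * kSig ^ 3) := hdr.trans ((min_le_right _ _).trans (min_le_right _ _))
  have hX : 0 < 4 * κΓ * kSig ^ 3 := by positivity
  have hΓ14 : κΓ * kSig ^ 3 * D ≤ 1 / 4 := by
    have h1 : D * (4 * κΓ * kSig ^ 3) ≤ 1 := by
      have h2 := mul_le_mul_of_nonneg_right hdr3 hX.le
      rwa [one_div, inv_mul_cancel₀ hX.ne'] at h2
    nlinarith [h1]
  have hc14 : kSig * D ≤ 1 / 4 := by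
    nlinarith [hΓ14, hκ2, hkSig0, hD0.le, mul_nonneg (mul_nonneg hκΓ0 hkSig0) hD0.le,
      mul_nonneg hkSig0 hD0.le]
  have hεq : ∀ q : {q : Fin p × Fin p // q ∈ S},
      |Sighat q.1.1 q.1.2 - Θs⁻¹ q.1.1 q.1.2| ≤ ε :=
    fun q => le_ciSup (f := fun q : {q : Fin p × Fin p // q ∈ S} =>
      |Sighat q.1.1 q.1.2 - Θs⁻¹ q.1.1 q.1.2|) (Set.Finite.bddAbove (Set.finite_range _)) q
  have hε0 : 0 ≤ ε := le_trans (abs_nonneg _) (hεq (Classical.arbitrary _))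
  have hlminpos : 0 < lmin := by
    obtain ⟨v, hv1, hveq⟩ := hlmin.1
    have hv0 : (fun i => v i) ≠ (0 : Fin p → ℝ) := by
      intro h
      have hz : v = 0 := by ext i; exact congrFun h i
      rw [hz] at hv1; simp at hv1
    have hq := hpd.dotProduct_mulVec_pos (x := fun i => v i) hv0
    have hsv : star (fun i => v i) = (fun i => v i) := by funext i; exact star_trivial _
    rw [hsv, dot_eq_quad] at hq
    rw [hveq]
    simpa using hq
  -- swap involution on S
  have hswapmem : ∀ q : {q : Fin p × Fin p // q ∈ S},
      ((q : Fin p × Fin p).2, (q : Fin p × Fin p).1) ∈ S := fun q => hswap q.2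
  set σf : {q : Fin p × Fin p // q ∈ S} → {q : Fin p × Fin p // q ∈ S} :=
    fun q => ⟨((q : Fin p × Fin p).2, (q : Fin p × Fin p).1), hswapmem q⟩ with hσdef
  have hσσ : ∀ q, σf (σf q) = q := fun q => Subtype.ext (by simp [hσdef])
  have hmatsym : ∀ x : {q : Fin p × Fin p // q ∈ S} → ℝ, (∀ q, x (σf q) = x q) →
      (matOf S x).IsSymm := by
    intro x hx
    exact matOf_isSymm S hswap fun a b h => hx ⟨(a, b), h⟩
  have hmatInf' : ∀ x : {q : Fin p × Fin p // q ∈ S} → ℝ, (∀ q, |x q| ≤ r) →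
      matInf (matOf S x) ≤ D := by
    intro x hx
    rw [hDdef]
    exact matInf_matOf_le S hr.le hx hcard
  have hpdx : ∀ x : {q : Fin p × Fin p // q ∈ S} → ℝ, (∀ q, |x q| ≤ r) → (∀ q, x (σf q) = x q) →
      (Θs + matOf S x).PosDef := by
    intro x h1 h2
    refine posDef_perturb hp Θs hsym lmin hlmin.2 _ (hmatsym x h2) ?_
    have := hmatInf' x h1
    linarith [hdr1, hlminpos]
  have hdetx : ∀ x, (∀ q, |x q| ≤ r) → (∀ q, x (σf q) = x q) →
      IsUnit (Θs + matOf S x).det := by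
    intro x h1 h2
    exact isUnit_iff_ne_zero.mpr (ne_of_gt (hpdx x h1 h2).det_pos)
  have hB1 : ∀ x, (∀ q, |x q| ≤ r) → (∀ q, x (σf q) = x q) →
      (Θs + matOf S x)⁻¹ = Θs⁻¹ - Θs⁻¹ * matOf S x * (Θs + matOf S x)⁻¹ := by
    intro x h1 h2
    have hBmul : (Θs + matOf S x) * (Θs + matOf S x)⁻¹ = 1 :=
      Matrix.mul_nonsing_inv _ (hdetx x h1 h2)
    have e : Θs⁻¹ * ((Θs + matOf S x) * (Θs + matOf S x)⁻¹) = Θs⁻¹ := by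
      rw [hBmul, mul_one]
    rw [← mul_assoc, mul_add, hST, add_mul, one_mul] at e
    exact eq_sub_of_add_eq e
  have hBsym : ∀ x, (∀ q, |x q| ≤ r) → (∀ q, x (σf q) = x q) →
      ((Θs + matOf S x)⁻¹).IsSymm := by
    intro x h1 h2
    rw [Matrix.IsSymm, Matrix.transpose_nonsing_inv, (hsym.add (hmatsym x h2)).eq]
  have hBinf : ∀ x, (∀ q, |x q| ≤ r) → (∀ q, x (σf q) = x q) →
      matInf (Θs + matOf S x)⁻¹ ≤ 4 / 3 * kSig := by
    intro x h1 h2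
    have h4 := hB1 x h1 h2
    have hΔ : matInf (matOf S x) ≤ D := hmatInf' x h1
    have hBnn : 0 ≤ matInf (Θs + matOf S x)⁻¹ := matInf_nonneg _
    have hmul : matInf (Θs⁻¹ * matOf S x * (Θs + matOf S x)⁻¹)
        ≤ kSig * D * matInf (Θs + matOf S x)⁻¹ := by
      calc matInf (Θs⁻¹ * matOf S x * (Θs + matOf S x)⁻¹)
          ≤ matInf (Θs⁻¹ * matOf S x) * matInf (Θs + matOf S x)⁻¹ := matInf_mul_le _ _
        _ ≤ (matInf Θs⁻¹ * matInf (matOf S x)) * matInf (Θs + matOf S x)⁻¹ :=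
            mul_le_mul_of_nonneg_right (matInf_mul_le _ _) hBnn
        _ ≤ kSig * D * matInf (Θs + matOf S x)⁻¹ := by
            rw [hkSigdef]
            refine mul_le_mul_of_nonneg_right ?_ hBnn
            exact mul_le_mul_of_nonneg_left hΔ (matInf_nonneg _)
    have hsub : matInf (Θs + matOf S x)⁻¹
        ≤ kSig + kSig * D * matInf (Θs + matOf S x)⁻¹ := by
      calc matInf (Θs + matOf S x)⁻¹
          = matInf (Θs⁻¹ - Θs⁻¹ * matOf S x * (Θs + matOf S x)⁻¹) := by rw [← h4]
        _ ≤ matInf Θs⁻¹ + matInf (Θs⁻¹ * matOf S x * (Θs + matOf S x)⁻¹) := matInf_sub_le _ _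
        _ ≤ kSig + kSig * D * matInf (Θs + matOf S x)⁻¹ := by
            rw [hkSigdef]
            exact add_le_add le_rfl hmul
    have hq : kSig * D * matInf (Θs + matOf S x)⁻¹ ≤ 1 / 4 * matInf (Θs + matOf S x)⁻¹ :=
      mul_le_mul_of_nonneg_right hc14 hBnn
    linarith
  have hR : ∀ x, (∀ q, |x q| ≤ r) → (∀ q, x (σf q) = x q) →
      (Θs + matOf S x)⁻¹ - Θs⁻¹ + Θs⁻¹ * matOf S x * Θs⁻¹
        = Θs⁻¹ * matOf S x * (Θs⁻¹ * matOf S x * (Θs + matOf S x)⁻¹) := by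
    intro x h1 h2
    have h4 := hB1 x h1 h2
    have hSB : Θs⁻¹ - (Θs + matOf S x)⁻¹ = Θs⁻¹ * matOf S x * (Θs + matOf S x)⁻¹ := by
      conv_lhs => rw [h4]
      rw [sub_sub_cancel]
    have key : (Θs + matOf S x)⁻¹ - Θs⁻¹ + Θs⁻¹ * matOf S x * Θs⁻¹
        = Θs⁻¹ * matOf S x * Θs⁻¹ - (Θs⁻¹ - (Θs + matOf S x)⁻¹) := by abel
    rw [key, hSB, ← mul_sub, hSB]
  -- the W-transpose bound
  have hWT : ∀ x, (∀ q, |x q| ≤ r) → (∀ q, x (σf q) = x q) →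
      matInf ((Θs⁻¹ * matOf S x * (Θs + matOf S x)⁻¹)ᵀ) ≤ 4 / 3 * kSig * (D * kSig) := by
    intro x h1 h2
    have ht : (Θs⁻¹ * matOf S x * (Θs + matOf S x)⁻¹)ᵀ
        = (Θs + matOf S x)⁻¹ * (matOf S x * Θs⁻¹) := by
      rw [Matrix.transpose_mul, Matrix.transpose_mul, hSsym.eq, (hmatsym x h2).eq,
        (hBsym x h1 h2).eq]
    rw [ht]
    have hΔ : matInf (matOf S x) ≤ D := hmatInf' x h1
    calc matInf ((Θs + matOf S x)⁻¹ * (matOf S x * Θs⁻¹))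
        ≤ matInf (Θs + matOf S x)⁻¹ * matInf (matOf S x * Θs⁻¹) := matInf_mul_le _ _
      _ ≤ matInf (Θs + matOf S x)⁻¹ * (matInf (matOf S x) * matInf Θs⁻¹) :=
          mul_le_mul_of_nonneg_left (matInf_mul_le _ _) (matInf_nonneg _)
      _ ≤ 4 / 3 * kSig * (D * kSig) := by
        rw [← hkSigdef]
        refine mul_le_mul (hBinf x h1 h2) ?_ ?_ (by positivity)
        · exact mul_le_mul_of_nonneg_right hΔ hkSig0
        · exact mul_nonneg (matInf_nonneg _) hkSig0
  -- entrywise bound on the remainder R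
  have hRent : ∀ x, (∀ q, |x q| ≤ r) → (∀ q, x (σf q) = x q) → ∀ a b : Fin p,
      |((Θs + matOf S x)⁻¹ - Θs⁻¹ + Θs⁻¹ * matOf S x * Θs⁻¹) a b|
        ≤ kSig * r * (4 / 3 * kSig * (D * kSig)) := by
    intro x h1 h2 a b
    rw [hR x h1 h2]
    have := entry_triple_le Θs⁻¹ (matOf S x) (Θs⁻¹ * matOf S x * (Θs + matOf S x)⁻¹)
      hr.le (abs_matOf_le S hr.le h1) a b
    refine this.trans ?_
    rw [← hkSigdef]
    refine mul_le_mul_of_nonneg_left (hWT x h1 h2) ?_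
    positivity
  -- the matrix Y and the map F
  set Ym : ({q : Fin p × Fin p // q ∈ S} → ℝ) → Matrix (Fin p) (Fin p) ℝ :=
    fun x => (Θs + matOf S x)⁻¹ - Θs⁻¹ + Θs⁻¹ * matOf S x * Θs⁻¹ - (Sighat - Θs⁻¹)
    with hYdef
  set Fm : ({q : Fin p × Fin p // q ∈ S} → ℝ) → ({q : Fin p × Fin p // q ∈ S} → ℝ) :=
    fun x => (kronSS p Θs⁻¹ S)⁻¹ *ᵥ
      (fun q : {q : Fin p × Fin p // q ∈ S} =>
        Ym x (q : Fin p × Fin p).1 (q : Fin p × Fin p).2) with hFdef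
  have hYent : ∀ x, (∀ q, |x q| ≤ r) → (∀ q, x (σf q) = x q) →
      ∀ q : {q : Fin p × Fin p // q ∈ S},
      |Ym x (q : Fin p × Fin p).1 (q : Fin p × Fin p).2|
        ≤ kSig * r * (4 / 3 * kSig * (D * kSig)) + ε := by
    intro x h1 h2 q
    have e1 : Ym x (q : Fin p × Fin p).1 (q : Fin p × Fin p).2
        = ((Θs + matOf S x)⁻¹ - Θs⁻¹ + Θs⁻¹ * matOf S x * Θs⁻¹) (q : Fin p × Fin p).1
            (q : Fin p × Fin p).2
          - (Sighat (q : Fin p × Fin p).1 (q : Fin p × Fin p).2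
            - Θs⁻¹ (q : Fin p × Fin p).1 (q : Fin p × Fin p).2) := by
      rw [hYdef]; simp [Matrix.sub_apply]
    rw [e1]
    refine (abs_sub _ _).trans ?_
    exact add_le_add (hRent x h1 h2 _ _) (hεq q)
  have hFball : ∀ x, (∀ q, |x q| ≤ r) → (∀ q, x (σf q) = x q) →
      ∀ q, |Fm x q| ≤ r := by
    intro x h1 h2 q
    have hb : (0:ℝ) ≤ kSig * r * (4 / 3 * kSig * (D * kSig)) + ε := by positivity
    have := abs_mulVec_le ((kronSS p Θs⁻¹ S)⁻¹) hb (hYent x h1 h2) q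
    rw [hFdef]
    refine this.trans ?_
    rw [← hκΓdef]
    have hmain : κΓ * (kSig * r * (4 / 3 * kSig * (D * kSig))) ≤ r / 3 := by
      have e2 : κΓ * (kSig * r * (4 / 3 * kSig * (D * kSig)))
          = 4 / 3 * (κΓ * kSig ^ 3 * D) * r := by ring
      rw [e2]
      nlinarith [mul_le_mul_of_nonneg_right hΓ14 hr.le]
    have hεb : κΓ * ε ≤ r / 2 := hdev
    calc κΓ * (kSig * r * (4 / 3 * kSig * (D * kSig)) + ε)
        = κΓ * (kSig * r * (4 / 3 * kSig * (D * kSig))) + κΓ * ε := by ring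
      _ ≤ r / 3 + r / 2 := add_le_add hmain hεb
      _ ≤ r := by linarith
  -- symmetry of Y and Γ⁻¹ under the swap
  have hYsym : ∀ x, (∀ q, |x q| ≤ r) → (∀ q, x (σf q) = x q) → (Ym x).IsSymm := by
    intro x h1 h2
    have hprod : (Θs⁻¹ * matOf S x * Θs⁻¹).IsSymm := by
      rw [Matrix.IsSymm, Matrix.transpose_mul, Matrix.transpose_mul, hSsym.eq,
        (hmatsym x h2).eq]
      exact (mul_assoc _ _ _).symm
    rw [hYdef]
    exact (((hBsym x h1 h2).sub hSsym).add hprod).sub (hSighat.sub hSsym)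
  set ef : {q : Fin p × Fin p // q ∈ S} ≃ {q : Fin p × Fin p // q ∈ S} :=
    ⟨σf, σf, hσσ, hσσ⟩ with hefdef
  have hΓswap : ∀ a b, (kronSS p Θs⁻¹ S)⁻¹ (σf a) (σf b) = (kronSS p Θs⁻¹ S)⁻¹ a b := by
    have hsub : (kronSS p Θs⁻¹ S).submatrix ef ef = kronSS p Θs⁻¹ S := by
      ext a b
      show (Θs⁻¹ ⊗ₖ Θs⁻¹) _ _ = (Θs⁻¹ ⊗ₖ Θs⁻¹) _ _
      rw [Matrix.kroneckerMap_apply, Matrix.kroneckerMap_apply]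
      exact mul_comm _ _
    have h1 : kronSS p Θs⁻¹ S * ((kronSS p Θs⁻¹ S)⁻¹.submatrix ef ef) = 1 := by
      have h0 := Matrix.submatrix_mul_equiv (kronSS p Θs⁻¹ S) ((kronSS p Θs⁻¹ S)⁻¹)
        ef ef (⇑ef)
      rw [hsub, Matrix.mul_nonsing_inv _ hΓinv, Matrix.submatrix_one_equiv] at h0
      exact h0
    have h2 : (kronSS p Θs⁻¹ S)⁻¹.submatrix ef ef = (kronSS p Θs⁻¹ S)⁻¹ :=
      (Matrix.inv_eq_right_inv h1).symm
    intro a b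
    exact congrFun (congrFun h2 a) b
  have hFsym : ∀ x, (∀ q, |x q| ≤ r) → (∀ q, x (σf q) = x q) →
      ∀ q, Fm x (σf q) = Fm x q := by
    intro x h1 h2 q
    have hYs := hYsym x h1 h2
    show ((kronSS p Θs⁻¹ S)⁻¹ *ᵥ _) (σf q) = ((kronSS p Θs⁻¹ S)⁻¹ *ᵥ _) q
    show (∑ b, (kronSS p Θs⁻¹ S)⁻¹ (σf q) b * Ym x (b : Fin p × Fin p).1 (b : Fin p × Fin p).2)
      = ∑ b, (kronSS p Θs⁻¹ S)⁻¹ q b * Ym x (b : Fin p × Fin p).1 (b : Fin p × Fin p).2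
    rw [← Equiv.sum_comp ef (fun b => (kronSS p Θs⁻¹ S)⁻¹ (σf q) b
      * Ym x (b : Fin p × Fin p).1 (b : Fin p × Fin p).2)]
    refine Finset.sum_congr rfl fun b _ => ?_
    have hb1 : (kronSS p Θs⁻¹ S)⁻¹ (σf q) (ef b) = (kronSS p Θs⁻¹ S)⁻¹ q b := hΓswap q b
    have hb2 : Ym x ((ef b : {q : Fin p × Fin p // q ∈ S}) : Fin p × Fin p).1
        ((ef b : {q : Fin p × Fin p // q ∈ S}) : Fin p × Fin p).2
        = Ym x (b : Fin p × Fin p).1 (b : Fin p × Fin p).2 := by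
      show Ym x (b : Fin p × Fin p).2 (b : Fin p × Fin p).1 = _
      exact hYs.apply _ _
    rw [hb1, hb2]
  -- difference of inverses
  have hBdiff : ∀ x x', (∀ q, |x q| ≤ r) → (∀ q, x (σf q) = x q) →
      (∀ q, |x' q| ≤ r) → (∀ q, x' (σf q) = x' q) →
      (Θs + matOf S x)⁻¹ - (Θs + matOf S x')⁻¹
        = (Θs + matOf S x)⁻¹ * (matOf S x' - matOf S x) * (Θs + matOf S x')⁻¹ := by
    intro x x' h1 h2 h1' h2'
    have e1 : (Θs + matOf S x') * (Θs + matOf S x')⁻¹ = 1 :=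
      Matrix.mul_nonsing_inv _ (hdetx x' h1' h2')
    have e2 : (Θs + matOf S x)⁻¹ * (Θs + matOf S x) = 1 :=
      Matrix.nonsing_inv_mul _ (hdetx x h1 h2)
    calc (Θs + matOf S x)⁻¹ - (Θs + matOf S x')⁻¹
        = (Θs + matOf S x)⁻¹ * ((Θs + matOf S x') * (Θs + matOf S x')⁻¹)
          - ((Θs + matOf S x)⁻¹ * (Θs + matOf S x)) * (Θs + matOf S x')⁻¹ := by
          rw [e1, e2, mul_one, one_mul]
      _ = _ := by noncomm_ring
  -- Lipschitz bound on Y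
  have hLipY : ∀ x x' (δ : ℝ), 0 ≤ δ → (∀ q, |x q| ≤ r) → (∀ q, x (σf q) = x q) →
      (∀ q, |x' q| ≤ r) → (∀ q, x' (σf q) = x' q) → (∀ q, |x q - x' q| ≤ δ) →
      ∀ q : {q : Fin p × Fin p // q ∈ S},
        |Ym x (q : Fin p × Fin p).1 (q : Fin p × Fin p).2
          - Ym x' (q : Fin p × Fin p).1 (q : Fin p × Fin p).2|
        ≤ kSig * δ * (4 / 3 * kSig * (D * kSig))
          + kSig * r * (4 / 3 * kSig * (((d : ℝ) * δ) * kSig))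
          + kSig * r * ((4 / 3 * kSig * (((d : ℝ) * δ) * (4 / 3 * kSig))) * (D * kSig)) := by
    intro x x' δ hδ0 h1 h2 h1' h2' hδ q
    have hδd : (0:ℝ) ≤ (d : ℝ) * δ := mul_nonneg (Nat.cast_nonneg d) hδ0
    have hk43 : (0:ℝ) ≤ 4 / 3 * kSig := by linarith [hkSig0]
    have hDk : (0:ℝ) ≤ D * kSig := mul_nonneg hD0.le hkSig0
    have hsubv : ∀ q', |(x - x') q'| ≤ δ := fun q' => hδ q'
    have hsubv' : ∀ q', |(x' - x) q'| ≤ δ := fun q' => by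
      rw [Pi.sub_apply, abs_sub_comm]; exact hδ q'
    have hE : ∀ i j, |(matOf S x - matOf S x') i j| ≤ δ := by
      rw [← matOf_sub]; exact abs_matOf_le S hδ0 hsubv
    have hEInf : matInf (matOf S x - matOf S x') ≤ (d : ℝ) * δ := by
      rw [← matOf_sub]; exact matInf_matOf_le S hδ0 hsubv hcard
    have hEInf' : matInf (matOf S x' - matOf S x) ≤ (d : ℝ) * δ := by
      rw [← matOf_sub]; exact matInf_matOf_le S hδ0 hsubv' hcard
    have hEsym : (matOf S x - matOf S x').IsSymm := (hmatsym x h2).sub (hmatsym x' h2')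
    have hE'sym : (matOf S x' - matOf S x).IsSymm := (hmatsym x' h2').sub (hmatsym x h2)
    have hΔ' : matInf (matOf S x') ≤ D := hmatInf' x' h1'
    -- decomposition
    have hy0 : Ym x - Ym x'
        = ((Θs + matOf S x)⁻¹ - Θs⁻¹ + Θs⁻¹ * matOf S x * Θs⁻¹)
          - ((Θs + matOf S x')⁻¹ - Θs⁻¹ + Θs⁻¹ * matOf S x' * Θs⁻¹) := by
      rw [hYdef]; ext i j; simp only [Matrix.sub_apply, Matrix.add_apply]; ring
    have hYdm : Ym x - Ym x'
        = Θs⁻¹ * (matOf S x - matOf S x') * (Θs⁻¹ * matOf S x * (Θs + matOf S x)⁻¹)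
          + Θs⁻¹ * matOf S x' * (Θs⁻¹ * (matOf S x - matOf S x') * (Θs + matOf S x)⁻¹)
          + Θs⁻¹ * matOf S x' * (Θs⁻¹ * matOf S x'
            * ((Θs + matOf S x)⁻¹ * (matOf S x' - matOf S x) * (Θs + matOf S x')⁻¹)) := by
      rw [hy0, hR x h1 h2, hR x' h1' h2', ← hBdiff x x' h1 h2 h1' h2']
      noncomm_ring
    -- entry bounds for the three terms
    have hT1 : ∀ a b : Fin p,
        |(Θs⁻¹ * (matOf S x - matOf S x')
          * (Θs⁻¹ * matOf S x * (Θs + matOf S x)⁻¹)) a b|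
        ≤ kSig * δ * (4 / 3 * kSig * (D * kSig)) := by
      intro a b
      have := entry_triple_le Θs⁻¹ (matOf S x - matOf S x')
        (Θs⁻¹ * matOf S x * (Θs + matOf S x)⁻¹) hδ0 hE a b
      refine this.trans ?_
      rw [← hkSigdef]
      exact mul_le_mul_of_nonneg_left (hWT x h1 h2) (mul_nonneg (matInf_nonneg _) hδ0)
    have hW2T : matInf ((Θs⁻¹ * (matOf S x - matOf S x') * (Θs + matOf S x)⁻¹)ᵀ)
        ≤ 4 / 3 * kSig * (((d : ℝ) * δ) * kSig) := by
      have ht : (Θs⁻¹ * (matOf S x - matOf S x') * (Θs + matOf S x)⁻¹)ᵀ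
          = (Θs + matOf S x)⁻¹ * ((matOf S x - matOf S x') * Θs⁻¹) := by
        rw [Matrix.transpose_mul, Matrix.transpose_mul, hSsym.eq, hEsym.eq,
          (hBsym x h1 h2).eq]
      rw [ht]
      calc matInf ((Θs + matOf S x)⁻¹ * ((matOf S x - matOf S x') * Θs⁻¹))
          ≤ matInf (Θs + matOf S x)⁻¹ * matInf ((matOf S x - matOf S x') * Θs⁻¹) :=
            matInf_mul_le _ _
        _ ≤ matInf (Θs + matOf S x)⁻¹
            * (matInf (matOf S x - matOf S x') * matInf Θs⁻¹) :=
            mul_le_mul_of_nonneg_left (matInf_mul_le _ _) (matInf_nonneg _)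
        _ ≤ 4 / 3 * kSig * (((d : ℝ) * δ) * kSig) := by
          rw [← hkSigdef]
          refine mul_le_mul (hBinf x h1 h2) ?_ ?_ hk43
          · exact mul_le_mul_of_nonneg_right hEInf hkSig0
          · exact mul_nonneg (matInf_nonneg _) hkSig0
    have hT2 : ∀ a b : Fin p,
        |(Θs⁻¹ * matOf S x'
          * (Θs⁻¹ * (matOf S x - matOf S x') * (Θs + matOf S x)⁻¹)) a b|
        ≤ kSig * r * (4 / 3 * kSig * (((d : ℝ) * δ) * kSig)) := by
      intro a b
      have := entry_triple_le Θs⁻¹ (matOf S x')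
        (Θs⁻¹ * (matOf S x - matOf S x') * (Θs + matOf S x)⁻¹) hr.le
        (abs_matOf_le S hr.le h1') a b
      refine this.trans ?_
      rw [← hkSigdef]
      exact mul_le_mul_of_nonneg_left hW2T (mul_nonneg (matInf_nonneg _) hr.le)
    have hW3T : matInf ((Θs⁻¹ * matOf S x'
        * ((Θs + matOf S x)⁻¹ * (matOf S x' - matOf S x) * (Θs + matOf S x')⁻¹))ᵀ)
        ≤ (4 / 3 * kSig * (((d : ℝ) * δ) * (4 / 3 * kSig))) * (D * kSig) := by
      have ht : (Θs⁻¹ * matOf S x'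
          * ((Θs + matOf S x)⁻¹ * (matOf S x' - matOf S x) * (Θs + matOf S x')⁻¹))ᵀ
          = (Θs + matOf S x')⁻¹ * ((matOf S x' - matOf S x) * (Θs + matOf S x)⁻¹)
            * (matOf S x' * Θs⁻¹) := by
        rw [Matrix.transpose_mul, Matrix.transpose_mul, Matrix.transpose_mul,
          Matrix.transpose_mul, hSsym.eq, (hmatsym x' h2').eq, hE'sym.eq,
          (hBsym x h1 h2).eq, (hBsym x' h1' h2').eq]
      rw [ht]
      calc matInf ((Θs + matOf S x')⁻¹ * ((matOf S x' - matOf S x) * (Θs + matOf S x)⁻¹)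
            * (matOf S x' * Θs⁻¹))
          ≤ matInf ((Θs + matOf S x')⁻¹ * ((matOf S x' - matOf S x) * (Θs + matOf S x)⁻¹))
            * matInf (matOf S x' * Θs⁻¹) := matInf_mul_le _ _
        _ ≤ (matInf (Θs + matOf S x')⁻¹
              * (matInf (matOf S x' - matOf S x) * matInf (Θs + matOf S x)⁻¹))
            * (matInf (matOf S x') * matInf Θs⁻¹) := by
            refine mul_le_mul ?_ (matInf_mul_le _ _) (matInf_nonneg _) ?_
            · refine (matInf_mul_le _ _).trans ?_
              refine mul_le_mul_of_nonneg_left (matInf_mul_le _ _) (matInf_nonneg _)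
            · exact mul_nonneg (matInf_nonneg _)
                (mul_nonneg (matInf_nonneg _) (matInf_nonneg _))
        _ ≤ (4 / 3 * kSig * (((d : ℝ) * δ) * (4 / 3 * kSig))) * (D * kSig) := by
            rw [← hkSigdef]
            refine mul_le_mul ?_ ?_ ?_ (mul_nonneg hk43 (mul_nonneg hδd hk43))
            · refine mul_le_mul (hBinf x' h1' h2') ?_ ?_ hk43
              · exact mul_le_mul hEInf' (hBinf x h1 h2) (matInf_nonneg _) hδd
              · exact mul_nonneg (matInf_nonneg _) (matInf_nonneg _)
            · exact mul_le_mul hΔ' le_rfl hkSig0 hD0.le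
            · exact mul_nonneg (matInf_nonneg _) (matInf_nonneg _)
    have hT3 : ∀ a b : Fin p,
        |(Θs⁻¹ * matOf S x' * (Θs⁻¹ * matOf S x'
          * ((Θs + matOf S x)⁻¹ * (matOf S x' - matOf S x) * (Θs + matOf S x')⁻¹))) a b|
        ≤ kSig * r * ((4 / 3 * kSig * (((d : ℝ) * δ) * (4 / 3 * kSig))) * (D * kSig)) := by
      intro a b
      have := entry_triple_le Θs⁻¹ (matOf S x')
        (Θs⁻¹ * matOf S x'
          * ((Θs + matOf S x)⁻¹ * (matOf S x' - matOf S x) * (Θs + matOf S x')⁻¹)) hr.le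
        (abs_matOf_le S hr.le h1') a b
      refine this.trans ?_
      rw [← hkSigdef]
      exact mul_le_mul_of_nonneg_left hW3T (mul_nonneg (matInf_nonneg _) hr.le)
    -- combine
    have hent : Ym x (q : Fin p × Fin p).1 (q : Fin p × Fin p).2
        - Ym x' (q : Fin p × Fin p).1 (q : Fin p × Fin p).2
        = (Ym x - Ym x') (q : Fin p × Fin p).1 (q : Fin p × Fin p).2 := rfl
    rw [hent, hYdm]
    rw [Matrix.add_apply, Matrix.add_apply]
    refine (abs_add_le _ _).trans ?_
    refine add_le_add ((abs_add_le _ _).trans (add_le_add (hT1 _ _) (hT2 _ _))) (hT3 _ _)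
  -- Lipschitz bound on F
  have hLipF : ∀ x x' (δ : ℝ), 0 ≤ δ → (∀ q, |x q| ≤ r) → (∀ q, x (σf q) = x q) →
      (∀ q, |x' q| ≤ r) → (∀ q, x' (σf q) = x' q) → (∀ q, |x q - x' q| ≤ δ) →
      ∀ q, |Fm x q - Fm x' q| ≤ 7 / 9 * δ := by
    intro x x' δ hδ0 h1 h2 h1' h2' hδ q
    have hvec : Fm x - Fm x' = (kronSS p Θs⁻¹ S)⁻¹ *ᵥ
        ((fun b : {q : Fin p × Fin p // q ∈ S} =>
          Ym x (b : Fin p × Fin p).1 (b : Fin p × Fin p).2)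
        - (fun b : {q : Fin p × Fin p // q ∈ S} =>
          Ym x' (b : Fin p × Fin p).1 (b : Fin p × Fin p).2)) := by
      rw [hFdef, Matrix.mulVec_sub]
    have hq0 : Fm x q - Fm x' q = ((kronSS p Θs⁻¹ S)⁻¹ *ᵥ
        ((fun b : {q : Fin p × Fin p // q ∈ S} =>
          Ym x (b : Fin p × Fin p).1 (b : Fin p × Fin p).2)
        - (fun b : {q : Fin p × Fin p // q ∈ S} =>
          Ym x' (b : Fin p × Fin p).1 (b : Fin p × Fin p).2))) q := by
      rw [← hvec]; rfl
    rw [hq0]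
    have hδd : (0:ℝ) ≤ (d : ℝ) * δ := mul_nonneg (Nat.cast_nonneg d) hδ0
    have hk43 : (0:ℝ) ≤ 4 / 3 * kSig := by linarith [hkSig0]
    have hDk : (0:ℝ) ≤ D * kSig := mul_nonneg hD0.le hkSig0
    have hb : (0:ℝ) ≤ kSig * δ * (4 / 3 * kSig * (D * kSig))
        + kSig * r * (4 / 3 * kSig * (((d : ℝ) * δ) * kSig))
        + kSig * r * ((4 / 3 * kSig * (((d : ℝ) * δ) * (4 / 3 * kSig))) * (D * kSig)) := by
      have b1 : (0:ℝ) ≤ kSig * δ * (4 / 3 * kSig * (D * kSig)) :=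
        mul_nonneg (mul_nonneg hkSig0 hδ0) (mul_nonneg hk43 hDk)
      have b2 : (0:ℝ) ≤ kSig * r * (4 / 3 * kSig * (((d : ℝ) * δ) * kSig)) :=
        mul_nonneg (mul_nonneg hkSig0 hr.le)
          (mul_nonneg hk43 (mul_nonneg hδd hkSig0))
      have b3 : (0:ℝ) ≤ kSig * r
          * ((4 / 3 * kSig * (((d : ℝ) * δ) * (4 / 3 * kSig))) * (D * kSig)) :=
        mul_nonneg (mul_nonneg hkSig0 hr.le)
          (mul_nonneg (mul_nonneg hk43 (mul_nonneg hδd hk43)) hDk)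
      linarith
    have hYb : ∀ b : {q : Fin p × Fin p // q ∈ S},
        |((fun b : {q : Fin p × Fin p // q ∈ S} =>
            Ym x (b : Fin p × Fin p).1 (b : Fin p × Fin p).2)
          - (fun b : {q : Fin p × Fin p // q ∈ S} =>
            Ym x' (b : Fin p × Fin p).1 (b : Fin p × Fin p).2)) b|
        ≤ kSig * δ * (4 / 3 * kSig * (D * kSig))
          + kSig * r * (4 / 3 * kSig * (((d : ℝ) * δ) * kSig))
          + kSig * r * ((4 / 3 * kSig * (((d : ℝ) * δ) * (4 / 3 * kSig))) * (D * kSig)) := by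
      intro b
      rw [Pi.sub_apply]
      exact hLipY x x' δ hδ0 h1 h2 h1' h2' hδ b
    have := abs_mulVec_le ((kronSS p Θs⁻¹ S)⁻¹) hb hYb q
    refine this.trans ?_
    rw [← hκΓdef]
    have e4 : κΓ * (kSig * δ * (4 / 3 * kSig * (D * kSig))
        + kSig * r * (4 / 3 * kSig * (((d : ℝ) * δ) * kSig))
        + kSig * r * ((4 / 3 * kSig * (((d : ℝ) * δ) * (4 / 3 * kSig))) * (D * kSig)))
        = 8 / 3 * ((κΓ * kSig ^ 3 * D) * δ)
          + 16 / 9 * ((kSig * D) * ((κΓ * kSig ^ 3 * D) * δ)) := by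
      rw [hDdef]; ring
    rw [e4]
    have hA0 : 0 ≤ κΓ * kSig ^ 3 * D := by positivity
    have hAδ : (κΓ * kSig ^ 3 * D) * δ ≤ 1 / 4 * δ :=
      mul_le_mul_of_nonneg_right hΓ14 hδ0
    have hAδ0 : 0 ≤ (κΓ * kSig ^ 3 * D) * δ := mul_nonneg hA0 hδ0
    have hCb : (kSig * D) * ((κΓ * kSig ^ 3 * D) * δ) ≤ 1 / 4 * (1 / 4 * δ) :=
      mul_le_mul hc14 hAδ hAδ0 (by norm_num)
    linarith
  -- the Γ*vec identity
  have hΓvec : ∀ x : {q : Fin p × Fin p // q ∈ S} → ℝ, ∀ q : {q : Fin p × Fin p // q ∈ S},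
      (kronSS p Θs⁻¹ S *ᵥ x) q
        = (Θs⁻¹ * matOf S x * Θs⁻¹) (q : Fin p × Fin p).1 (q : Fin p × Fin p).2 := by
    intro x q
    show ∑ b, kronSS p Θs⁻¹ S q b * x b = _
    have hL : ∀ b : {q' : Fin p × Fin p // q' ∈ S}, kronSS p Θs⁻¹ S q b * x b
        = Θs⁻¹ (q : Fin p × Fin p).1 (b : Fin p × Fin p).1
          * matOf S x (b : Fin p × Fin p).1 (b : Fin p × Fin p).2
          * Θs⁻¹ (b : Fin p × Fin p).2 (q : Fin p × Fin p).2 := by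
      intro b
      have hmem : ((b : Fin p × Fin p).1, (b : Fin p × Fin p).2) ∈ S := by
        rw [Prod.mk.eta]; exact b.2
      have hm : matOf S x (b : Fin p × Fin p).1 (b : Fin p × Fin p).2 = x b := by
        rw [matOf_apply_mem S x hmem]
      calc kronSS p Θs⁻¹ S q b * x b
          = Θs⁻¹ (q : Fin p × Fin p).1 (b : Fin p × Fin p).1
            * Θs⁻¹ (q : Fin p × Fin p).2 (b : Fin p × Fin p).2 * x b := by
            rw [kronSS, Matrix.submatrix_apply, Matrix.kroneckerMap_apply]
        _ = _ := by
            rw [hSsym.apply (b : Fin p × Fin p).2 (q : Fin p × Fin p).2, hm]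
            ring
    rw [Finset.sum_congr rfl (fun b _ => hL b)]
    have hRHS : (Θs⁻¹ * matOf S x * Θs⁻¹) (q : Fin p × Fin p).1 (q : Fin p × Fin p).2
        = ∑ uv : Fin p × Fin p, Θs⁻¹ (q : Fin p × Fin p).1 uv.1
            * matOf S x uv.1 uv.2 * Θs⁻¹ uv.2 (q : Fin p × Fin p).2 := by
      rw [Matrix.mul_apply]
      simp only [Matrix.mul_apply, Finset.sum_mul]
      rw [Fintype.sum_prod_type]
      exact Finset.sum_comm
    have hzero : ∀ uv ∈ Finset.univ, uv ∉ S →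
        Θs⁻¹ (q : Fin p × Fin p).1 uv.1 * matOf S x uv.1 uv.2
          * Θs⁻¹ uv.2 (q : Fin p × Fin p).2 = 0 := by
      intro uv _ huv
      have hz : matOf S x uv.1 uv.2 = 0 := by
        have hnm : (uv.1, uv.2) ∉ S := by rw [Prod.mk.eta]; exact huv
        simp [matOf, hnm]
      rw [hz]; ring
    rw [hRHS, ← Finset.sum_subset (Finset.subset_univ S) hzero]
    conv_rhs => rw [← Finset.sum_attach S (fun uv => Θs⁻¹ (q : Fin p × Fin p).1 uv.1
      * matOf S x uv.1 uv.2 * Θs⁻¹ uv.2 (q : Fin p × Fin p).2)]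
    rw [← Finset.univ_eq_attach]
  -- the projection onto the symmetric ball
  set Pi0 : ({q : Fin p × Fin p // q ∈ S} → ℝ) → ({q : Fin p × Fin p // q ∈ S} → ℝ) :=
    fun x q => max (-r) (min r ((x q + x (σf q)) / 2)) with hPidef
  have hPib : ∀ x q, |Pi0 x q| ≤ r := by
    intro x q
    simp only [hPidef]
    rw [abs_le]
    exact ⟨le_max_left _ _, max_le (by linarith [hr]) (min_le_left _ _)⟩
  have hPis : ∀ x q, Pi0 x (σf q) = Pi0 x q := by
    intro x q
    simp only [hPidef]
    rw [hσσ q, add_comm (x (σf q)) (x q)]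
  have hPiId : ∀ x, (∀ q, |x q| ≤ r) → (∀ q, x (σf q) = x q) → Pi0 x = x := by
    intro x h1 h2
    funext q
    simp only [hPidef]
    rw [h2 q]
    have hh : (x q + x q) / 2 = x q := by ring
    rw [hh, min_eq_right (abs_le.mp (h1 q)).2, max_eq_right (abs_le.mp (h1 q)).1]
  have hPiLip : ∀ x y q, |Pi0 x q - Pi0 y q| ≤ dist x y := by
    intro x y q
    simp only [hPidef]
    have h1 : |max (-r) (min r ((x q + x (σf q)) / 2))
        - max (-r) (min r ((y q + y (σf q)) / 2))|
        ≤ |min r ((x q + x (σf q)) / 2) - min r ((y q + y (σf q)) / 2)| := by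
      rw [max_comm (-r) _, max_comm (-r) _]
      exact abs_max_sub_max_le_abs _ _ _
    refine h1.trans ?_
    have h2 : |min r ((x q + x (σf q)) / 2) - min r ((y q + y (σf q)) / 2)|
        ≤ |(x q + x (σf q)) / 2 - (y q + y (σf q)) / 2| := by
      have := abs_min_sub_min_le_max r ((x q + x (σf q)) / 2) r ((y q + y (σf q)) / 2)
      simpa using this
    refine h2.trans ?_
    have hxq : |x q - y q| ≤ dist x y := by
      have := dist_le_pi_dist x y q
      rwa [Real.dist_eq] at this
    have hxq' : |x (σf q) - y (σf q)| ≤ dist x y := by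
      have := dist_le_pi_dist x y (σf q)
      rwa [Real.dist_eq] at this
    have he : (x q + x (σf q)) / 2 - (y q + y (σf q)) / 2
        = (x q - y q + (x (σf q) - y (σf q))) / 2 := by ring
    rw [he, abs_div, abs_two]
    have habs : |x q - y q + (x (σf q) - y (σf q))| ≤ 2 * dist x y :=
      (abs_add_le _ _).trans (by linarith)
    linarith
  -- the contraction and its fixed point
  set gmap : ({q : Fin p × Fin p // q ∈ S} → ℝ) → ({q : Fin p × Fin p // q ∈ S} → ℝ) :=
    fun x => Fm (Pi0 x) with hgdef
  set Kc : NNReal := ⟨7 / 9, by norm_num⟩ with hKcdef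
  have hgcontr : ContractingWith Kc gmap := by
    constructor
    · have hcoe : (Kc : ℝ) = 7 / 9 := rfl
      rw [← NNReal.coe_lt_coe, hcoe, NNReal.coe_one]
      norm_num
    · refine LipschitzWith.of_dist_le_mul fun x y => ?_
      have hcoe : (Kc : ℝ) = 7 / 9 := rfl
      rw [hcoe]
      refine (dist_pi_le_iff (mul_nonneg (by norm_num) dist_nonneg)).mpr fun q => ?_
      rw [Real.dist_eq]
      exact hLipF (Pi0 x) (Pi0 y) (dist x y) dist_nonneg (hPib x) (hPis x) (hPib y)
        (hPis y) (fun q' => hPiLip x y q') q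
  obtain ⟨z, hzfix, -, -⟩ := hgcontr.exists_fixedPoint (fun _ => 0) (edist_ne_top _ _)
  have hgz : Fm (Pi0 z) = z := hzfix
  have hzD1 : ∀ q, |z q| ≤ r := by
    intro q
    rw [← hgz]
    exact hFball (Pi0 z) (hPib z) (hPis z) q
  have hzD2 : ∀ q, z (σf q) = z q := by
    intro q
    conv_lhs => rw [← hgz]
    conv_rhs => rw [← hgz]
    exact hFsym (Pi0 z) (hPib z) (hPis z) q
  have hPz : Pi0 z = z := hPiId z hzD1 hzD2
  have hzF : Fm z = z := by rw [hPz] at hgz; exact hgz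
  -- the fixed-point equation gives the key identity on S
  have hfix : ∀ q : {q : Fin p × Fin p // q ∈ S},
      (Θs⁻¹ * matOf S z * Θs⁻¹) (q : Fin p × Fin p).1 (q : Fin p × Fin p).2
        = Ym z (q : Fin p × Fin p).1 (q : Fin p × Fin p).2 := by
    have h1 : kronSS p Θs⁻¹ S *ᵥ z = kronSS p Θs⁻¹ S *ᵥ (Fm z) := by rw [hzF]
    rw [hFdef] at h1
    rw [Matrix.mulVec_mulVec, Matrix.mul_nonsing_inv _ hΓinv, Matrix.one_mulVec] at h1
    intro q
    rw [← hΓvec z q, h1]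
  -- assemble the answer
  refine ⟨Θs + matOf S z, hsym.add (hmatsym z hzD2), ?_, ?_, ?_, ?_, ?_⟩
  · intro q hq
    have hz1 : Θs q.1 q.2 = 0 := by
      by_contra hne
      exact hq ((hS q).mpr hne)
    have hz2 : matOf S z q.1 q.2 = 0 := by
      have hnm : (q.1, q.2) ∉ S := by rw [Prod.mk.eta]; exact hq
      simp [matOf, hnm]
    rw [Matrix.add_apply, hz1, hz2, add_zero]
  · intro i j
    have he : (Θs + matOf S z) i j - Θs i j = matOf S z i j := by
      rw [Matrix.add_apply]; ring
    rw [he]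
    exact abs_matOf_le S hr.le hzD1 i j
  · have he : Θs + matOf S z - Θs = matOf S z := by
      rw [add_sub_cancel_left]
    rw [he]
    exact specNorm_le_matInf hp _ (hmatsym z hzD2) (hmatInf' z hzD1)
  · exact isUnit_iff_ne_zero.mpr (ne_of_gt (hpdx z hzD1 hzD2).det_pos)
  · intro q hq
    have he := hfix ⟨q, hq⟩
    have hY : Ym z q.1 q.2
        = (Θs + matOf S z)⁻¹ q.1 q.2 - Θs⁻¹ q.1 q.2
          + (Θs⁻¹ * matOf S z * Θs⁻¹) q.1 q.2
          - (Sighat q.1 q.2 - Θs⁻¹ q.1 q.2) := by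
      rw [hYdef]
      simp [Matrix.sub_apply, Matrix.add_apply]
    rw [hY] at he
    have : Sighat q.1 q.2 = (Θs + matOf S z)⁻¹ q.1 q.2 := by linarith [he]
    exact this
end
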